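/- arXiv:1103.4447 — 5 statements merged into one kernel-verified Lean document; each statement's English description precedes it below -/
import Mathlib

section
/- If V is a primary decomposable subspace of R = k[t] (i.e. V ≠ 0 and S(V) contains O(b) for some nonzero b ∈ R), then C(R,V) = {a ∈ R : aR ⊆ V} is a nonzero ideal of R, and consequently the quotient k-vector space R/V is finite-dimensional. -/
open Polynomial

/-- If `V` is a primary decomposable subspace of `k[t]` (i.e. `V ≠ 0` and
`O(b) ⊆ S(V)` for some `b ≠ 0`), then `C(R,V)` is a nonzero ideal of `k[t]`
and `k[t]/V` is a finite-dimensional `k`-vector space. -/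
theorem stmt5 {k : Type} [Field k] [CharZero k] (V : Submodule k (Polynomial k))
    (hV : V ≠ ⊥)
    (hpd : ∃ b : Polynomial k, b ≠ 0 ∧ ∀ a : Polynomial k,
        b ∣ derivative a → ∀ v ∈ V, a * v ∈ V) :
    (∃ J : Ideal (Polynomial k),
        (J : Set (Polynomial k)) = {a : Polynomial k | ∀ r : Polynomial k, a * r ∈ V} ∧
        J ≠ ⊥) ∧
    FiniteDimensional k (Polynomial k ⧸ V) := by
  obtain ⟨b, hb, hS⟩ := hpd
  obtain ⟨v0, hv0V, hv0⟩ := Submodule.exists_mem_ne_zero_of_ne_bot hV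
  set a : Polynomial k := b * b * v0 with ha_def
  have ha : a ≠ 0 := mul_ne_zero (mul_ne_zero hb hb) hv0
  have haV : ∀ r : Polynomial k, a * r ∈ V := by
    intro r
    have hdvd : b ∣ derivative (b * b * r) := by
      rw [derivative_mul, derivative_mul]
      exact dvd_add (((dvd_mul_left b (derivative b)).add
        (dvd_mul_right b (derivative b))).mul_right r) ((dvd_mul_right b b).mul_right _)
    have h := hS (b * b * r) hdvd v0 hv0V
    have heq : a * r = b * b * r * v0 := by ring
    rwa [heq]
  constructor
  · refine ⟨{ carrier := setOf (fun a : Polynomial k => ∀ r : Polynomial k, a * r ∈ V)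
              zero_mem' := fun r => by simp
              add_mem' := fun {x y} hx hy r => by
                rw [show (x + y) * r = x * r + y * r by ring]
                exact V.add_mem (hx r) (hy r)
              smul_mem' := fun c x hx r => by
                rw [show c • x * r = x * (c * r) by rw [smul_eq_mul]; ring]
                exact hx (c * r) }, rfl, ?_⟩
    intro h
    have hmem : a ∈ (⊥ : Ideal (Polynomial k)) := h ▸ haV
    exact ha (by simpa using hmem)
  · have hle : (Ideal.span {a} : Ideal (Polynomial k)).restrictScalars k ≤ V := by
      intro x hx
      rw [Submodule.restrictScalars_mem, Ideal.mem_span_singleton] at hx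
      obtain ⟨c, rfl⟩ := hx
      exact haV c
    haveI : Module.Finite k (Polynomial k ⧸ Ideal.span {a}) :=
      Module.Finite.of_basis (AdjoinRoot.powerBasis ha).basis
    haveI : FiniteDimensional k
        (Polynomial k ⧸ (Ideal.span {a} : Ideal (Polynomial k)).restrictScalars k) :=
      Module.Finite.equiv
        (Submodule.Quotient.restrictScalarsEquiv k
          (Ideal.span {a} : Ideal (Polynomial k))).symm
    have hle' : (Ideal.span {a} : Ideal (Polynomial k)).restrictScalars k ≤
        V.comap (LinearMap.id : Polynomial k →ₗ[k] Polynomial k) := hle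
    have hsurj : Function.Surjective
        (Submodule.mapQ ((Ideal.span {a} : Ideal (Polynomial k)).restrictScalars k) V
          LinearMap.id hle') := by
      intro y
      obtain ⟨x, rfl⟩ := Submodule.Quotient.mk_surjective V y
      exact ⟨Submodule.Quotient.mk x, by simp [Submodule.mapQ_apply]⟩
    exact Module.Finite.of_surjective _ hsurj
end

section
/- Let V be a primary decomposable subspace of R = k[t], let D(R,V) = {d ∈ k(t)[∂] : d(R) ⊆ V}, let p ∈ k[t], and let σ = exp(ad(p)). Then σ(D(R,V)) = D(R,V) if and only if p ∈ S(V) = {a ∈ R : aV ⊆ V}. -/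
open Polynomial

/-- Multiplication by `t` as a `k`-linear endomorphism of `k[t]`. -/
noncomputable def Tmul (k : Type) [Field k] : Module.End k (Polynomial k) :=
  Algebra.lmul k (Polynomial k) X

/-- The derivative `∂ = d/dt` as a `k`-linear endomorphism of `k[t]`. -/
noncomputable def Dop (k : Type) [Field k] : Module.End k (Polynomial k) :=
  Polynomial.derivative

/-- The first Weyl algebra `A₁ = k⟨t,∂⟩`, realized as the subalgebra of
`End_k(k[t])` generated by multiplication by `t` and the derivative. -/
noncomputable def WeylA (k : Type) [Field k] : Subalgebra k (Module.End k (Polynomial k)) :=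
  Algebra.adjoin k {Tmul k, Dop k}

/-- `ad(p) : d ↦ [d,p] = dp - pd`, as a `k`-linear endomorphism of `End_k(k[t])`. -/
noncomputable def adOp {k : Type} [Field k] (p : Module.End k (Polynomial k)) :
    Module.End k (Module.End k (Polynomial k)) :=
  LinearMap.mulRight k p - LinearMap.mulLeft k p

set_option linter.unusedSectionVars false
set_option maxHeartbeats 1000000

section Aux
variable {k : Type} [Field k]

lemma lmul_apply' (c h : Polynomial k) : Algebra.lmul k (Polynomial k) c h = c * h := by
  simp [Algebra.coe_lmul_eq_mul, LinearMap.mul_apply']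

lemma adOp_apply (p d : Module.End k (Polynomial k)) : adOp p d = d * p - p * d := by
  simp [adOp, LinearMap.sub_apply, LinearMap.mulRight_apply, LinearMap.mulLeft_apply]

lemma adOp_mul (p d e : Module.End k (Polynomial k)) :
    adOp p (d * e) = d * adOp p e + adOp p d * e := by
  simp only [adOp_apply, mul_sub, sub_mul, mul_assoc]
  abel

lemma lmul_eq_aeval (c : Polynomial k) :
    Algebra.lmul k (Polynomial k) c = Polynomial.aeval (Tmul k) c := by
  have : (Algebra.lmul k (Polynomial k)) = (Polynomial.aeval (Tmul k)).comp
      (Polynomial.aeval (X : Polynomial k)) := by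
    apply Polynomial.algHom_ext
    simp [Tmul]
  rw [this]
  simp

lemma lmul_mem_weyl (c : Polynomial k) : Algebra.lmul k (Polynomial k) c ∈ WeylA k := by
  rw [lmul_eq_aeval]
  exact Algebra.adjoin_mono (by simp) (Polynomial.aeval_mem_adjoin_singleton k (Tmul k))

lemma adOp_lmul (q c : Polynomial k) :
    adOp (Algebra.lmul k (Polynomial k) q) (Algebra.lmul k (Polynomial k) c) = 0 := by
  rw [adOp_apply, ← map_mul, ← map_mul, mul_comm, sub_self]

lemma adOp_Dop (q : Polynomial k) :
    adOp (Algebra.lmul k (Polynomial k) q) (Dop k)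
      = Algebra.lmul k (Polynomial k) (derivative q) := by
  rw [adOp_apply]
  refine LinearMap.ext fun h => ?_
  simp only [LinearMap.sub_apply, Module.End.mul_apply, lmul_apply']
  show derivative (q * h) - q * derivative h = derivative q * h
  rw [derivative_mul]
  ring

lemma adOp_pow_succ' (p : Module.End k (Polynomial k)) (n : ℕ) (f : Module.End k (Polynomial k)) :
    (adOp p ^ (n+1)) f = (adOp p ^ n) (adOp p f) := by
  rw [pow_succ]; rfl

lemma adOp_pow_succ (p : Module.End k (Polynomial k)) (n : ℕ) (f : Module.End k (Polynomial k)) :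
    (adOp p ^ (n+1)) f = adOp p ((adOp p ^ n) f) := by
  rw [pow_succ']; rfl

/-- nilpotence is preserved by products -/
lemma nil_mul (p : Module.End k (Polynomial k)) :
    ∀ (n : ℕ) (N M : ℕ) (d e : Module.End k (Polynomial k)), N + M ≤ n →
      (adOp p ^ N) d = 0 → (adOp p ^ M) e = 0 → ∃ K, (adOp p ^ K) (d * e) = 0 := by
  intro n
  induction n with
  | zero =>
    intro N M d e hNM hd he
    have hN : N = 0 := by omega
    subst hN
    simp only [pow_zero, Module.End.one_apply] at hd
    exact ⟨0, by simp [hd]⟩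
  | succ n ih =>
    intro N M d e hNM hd he
    match N, M with
    | 0, M =>
      simp only [pow_zero, Module.End.one_apply] at hd
      exact ⟨0, by simp [hd]⟩
    | N+1, 0 =>
      simp only [pow_zero, Module.End.one_apply] at he
      exact ⟨0, by simp [he]⟩
    | N+1, M+1 =>
      have h1 : (adOp p ^ M) (adOp p e) = 0 := by rw [← adOp_pow_succ']; exact he
      have h2 : (adOp p ^ N) (adOp p d) = 0 := by rw [← adOp_pow_succ']; exact hd
      obtain ⟨K1, hK1⟩ := ih (N+1) M d (adOp p e) (by omega) hd h1
      obtain ⟨K2, hK2⟩ := ih N (M+1) (adOp p d) e (by omega) h2 he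
      refine ⟨max K1 K2 + 1, ?_⟩
      rw [adOp_pow_succ', adOp_mul, map_add]
      have e1 : (adOp p ^ max K1 K2) (d * adOp p e) = 0 := by
        have : max K1 K2 = (max K1 K2 - K1) + K1 := by omega
        rw [this, pow_add, Module.End.mul_apply, hK1, map_zero]
      have e2 : (adOp p ^ max K1 K2) (adOp p d * e) = 0 := by
        have : max K1 K2 = (max K1 K2 - K2) + K2 := by omega
        rw [this, pow_add, Module.End.mul_apply, hK2, map_zero]
      rw [e1, e2, add_zero]

lemma weyl_nil (q : Polynomial k) (d : Module.End k (Polynomial k)) (hd : d ∈ WeylA k) :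
    ∃ N, (adOp (Algebra.lmul k (Polynomial k) q) ^ N) d = 0 := by
  set p := Algebra.lmul k (Polynomial k) q with hp
  induction hd using Algebra.adjoin_induction with
  | mem x hx =>
    rcases hx with hx | hx
    · subst hx
      exact ⟨1, by rw [pow_one]; exact adOp_lmul q X⟩
    · simp only [Set.mem_singleton_iff] at hx
      subst hx
      refine ⟨2, ?_⟩
      have : (adOp p ^ 2) (Dop k) = adOp p (adOp p (Dop k)) := by
        rw [show (2:ℕ) = 1 + 1 by rfl, adOp_pow_succ', pow_one]
      rw [this, adOp_Dop, adOp_lmul]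
  | algebraMap r =>
    refine ⟨1, ?_⟩
    rw [pow_one, adOp_apply]
    simp [Algebra.algebraMap_eq_smul_one]
  | add x y hx hy ihx ihy =>
    obtain ⟨N1, h1⟩ := ihx
    obtain ⟨N2, h2⟩ := ihy
    refine ⟨max N1 N2, ?_⟩
    rw [map_add]
    have e1 : (adOp p ^ max N1 N2) x = 0 := by
      have : max N1 N2 = (max N1 N2 - N1) + N1 := by omega
      rw [this, pow_add, Module.End.mul_apply, h1, map_zero]
    have e2 : (adOp p ^ max N1 N2) y = 0 := by
      have : max N1 N2 = (max N1 N2 - N2) + N2 := by omega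
      rw [this, pow_add, Module.End.mul_apply, h2, map_zero]
    rw [e1, e2, add_zero]
  | mul x y hx hy ihx ihy =>
    obtain ⟨N1, h1⟩ := ihx
    obtain ⟨N2, h2⟩ := ihy
    exact nil_mul p (N1 + N2) N1 N2 x y le_rfl h1 h2

end Aux

section P
variable {k : Type} [Field k] [CharZero k]

noncomputable def Pexp (a : k) (N : ℕ) : Polynomial k :=
  ∑ n ∈ Finset.range N, Polynomial.C (a^n * (n.factorial : k)⁻¹) * X^n

lemma Pexp_coeff (a : k) (N m : ℕ) :
    (Pexp a N).coeff m = if m < N then a^m * (m.factorial : k)⁻¹ else 0 := by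
  rw [Pexp, finset_sum_coeff]
  simp only [coeff_C_mul, coeff_X_pow, mul_ite, mul_one, mul_zero]
  rw [Finset.sum_ite_eq (Finset.range N) m]
  simp [Finset.mem_range]

lemma Pexp_mul_dvd (a b : k) (N : ℕ) :
    (X : Polynomial k)^N ∣ Pexp a N * Pexp b N - Pexp (a+b) N := by
  rw [X_pow_dvd_iff]
  intro s hs
  rw [coeff_sub, coeff_mul, Finset.Nat.sum_antidiagonal_eq_sum_range_succ_mk]
  have key : ∀ i ∈ Finset.range (s+1),
      (Pexp a N).coeff i * (Pexp b N).coeff (s - i)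
        = (a^i * b^(s-i) * (s.choose i : k)) * (s.factorial : k)⁻¹ := by
    intro i hi
    rw [Finset.mem_range] at hi
    have his : i ≤ s := by omega
    rw [Pexp_coeff, Pexp_coeff, if_pos (by omega), if_pos (by omega)]
    have hfac : ((s.factorial : k)) = (s.choose i : k) * (i.factorial : k) * ((s-i).factorial : k) := by
      exact_mod_cast (Nat.choose_mul_factorial_mul_factorial his).symm
    have h1 : (i.factorial : k) ≠ 0 := Nat.cast_ne_zero.mpr (Nat.factorial_ne_zero i)
    have h2 : ((s-i).factorial : k) ≠ 0 := Nat.cast_ne_zero.mpr (Nat.factorial_ne_zero (s-i))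
    have h3 : (s.factorial : k) ≠ 0 := Nat.cast_ne_zero.mpr (Nat.factorial_ne_zero s)
    have h4 : ((s.choose i : ℕ) : k) ≠ 0 :=
      Nat.cast_ne_zero.mpr (Nat.choose_pos his).ne'
    rw [hfac, mul_inv, mul_inv]
    field_simp
  rw [Finset.sum_congr rfl key, ← Finset.sum_mul, Pexp_coeff, if_pos hs]
  have : (a+b)^s = ∑ i ∈ Finset.range (s+1), a^i * b^(s-i) * (s.choose i : k) := by
    rw [add_pow]
  rw [← this, sub_self]

variable (A : Module.End k (Module.End k (Polynomial k)))

lemma aeval_Pexp (a : k) (N : ℕ) (f : Module.End k (Polynomial k)) :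
    (Polynomial.aeval A (Pexp a N)) f
      = ∑ n ∈ Finset.range N, (a^n * (n.factorial : k)⁻¹) • ((A^n) f) := by
  rw [Pexp, map_sum, LinearMap.sum_apply]
  refine Finset.sum_congr rfl fun n _ => ?_
  rw [map_mul, aeval_C, aeval_X_pow, Module.End.mul_apply, Module.algebraMap_end_apply]

lemma Pexp_comp (a b : k) (N : ℕ) (f : Module.End k (Polynomial k))
    (hf : (A^N) f = 0) :
    (Polynomial.aeval A (Pexp a N)) ((Polynomial.aeval A (Pexp b N)) f)
      = (Polynomial.aeval A (Pexp (a+b) N)) f := by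
  obtain ⟨S, hS⟩ := Pexp_mul_dvd a b N
  have h1 : Pexp a N * Pexp b N = Pexp (a+b) N + X^N * S := by
    rw [← hS]; ring
  have h2 : (Polynomial.aeval A (Pexp a N)) ((Polynomial.aeval A (Pexp b N)) f)
      = (Polynomial.aeval A (Pexp a N * Pexp b N)) f := by
    rw [map_mul, Module.End.mul_apply]
  rw [h2, h1, map_add, LinearMap.add_apply]
  have h3 : (Polynomial.aeval A (X^N * S)) f = 0 := by
    rw [mul_comm, map_mul, Module.End.mul_apply, aeval_X_pow, hf, map_zero]
  rw [h3, add_zero]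

lemma aeval_nil_absorb (P : Polynomial k) (N : ℕ) (f : Module.End k (Polynomial k))
    (hf : (A^N) f = 0) : (A^N) ((Polynomial.aeval A P) f) = 0 := by
  have h1 : (A^N) ((Polynomial.aeval A P) f) = (Polynomial.aeval A (X^N * P)) f := by
    rw [map_mul, aeval_X_pow, Module.End.mul_apply]
  rw [h1, mul_comm, map_mul, Module.End.mul_apply, aeval_X_pow, hf, map_zero]

lemma Pexp_zero_apply (N : ℕ) (hN : 0 < N) (f : Module.End k (Polynomial k)) :
    (Polynomial.aeval A (Pexp (0:k) N)) f = f := by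
  rw [aeval_Pexp]
  rw [Finset.sum_eq_single_of_mem 0 (Finset.mem_range.mpr hN)]
  · simp
  · intro n _ hn
    simp [zero_pow hn]

end P

section E0
variable {k : Type} [Field k] [CharZero k]

noncomputable def Ib (b : Polynomial k) : Submodule k (Polynomial k) :=
  (Ideal.span {b}).restrictScalars k

lemma mem_Ib {b x : Polynomial k} : x ∈ Ib b ↔ b ∣ x := by
  rw [Ib, Submodule.restrictScalars_mem, Ideal.mem_span_singleton]

lemma finite_quot_Ib (b : Polynomial k) (hb : b ≠ 0) :
    Module.Finite k (Polynomial k ⧸ Ib b) := by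
  set n := b.natDegree + 1
  have hmono : (b * C b.leadingCoeff⁻¹).Monic := monic_mul_leadingCoeff_inv hb
  have : Module.Finite k (degreeLT k n) :=
    Module.Finite.equiv (degreeLTEquiv k n).symm
  refine Module.Finite.of_surjective
    ((Ib b).mkQ.comp (degreeLT k n).subtype) ?_
  intro y
  obtain ⟨x, rfl⟩ := (Ib b).mkQ_surjective y
  have hdeg : (x %ₘ (b * C b.leadingCoeff⁻¹)).degree < (n : WithBot ℕ) := by
    refine lt_of_lt_of_le (degree_modByMonic_lt x hmono) ?_
    calc (b * C b.leadingCoeff⁻¹).degree ≤ b.degree + (C b.leadingCoeff⁻¹).degree :=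
          degree_mul_le _ _
      _ ≤ b.degree + 0 := add_le_add le_rfl degree_C_le
      _ = b.degree := by rw [add_zero]
      _ ≤ (b.natDegree : WithBot ℕ) := degree_le_natDegree
      _ ≤ (n : WithBot ℕ) := by exact_mod_cast Nat.le_succ _
  refine ⟨⟨x %ₘ (b * C b.leadingCoeff⁻¹), mem_degreeLT.mpr hdeg⟩, ?_⟩
  simp only [LinearMap.comp_apply, Submodule.subtype_apply]
  rw [Submodule.mkQ_apply, Submodule.mkQ_apply, Submodule.Quotient.eq]
  rw [modByMonic_eq_sub_mul_div x (b * C b.leadingCoeff⁻¹), sub_sub_cancel_left, mem_Ib, dvd_neg]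
  exact dvd_mul_of_dvd_left (dvd_mul_right b _) _

lemma exists_seq (b : Polynomial k) (hb : b ≠ 0) :
    ∃ (n : ℕ) (s : ℕ → Polynomial k), 0 < n ∧ s 0 = 0 ∧
      (∀ j, 1 ≤ j → j ≤ n → b ∣ (derivative (s j) - s (j-1))) ∧
      s n = (n.factorial : k)⁻¹ • X^n := by
  haveI := finite_quot_Ib b hb
  haveI : IsNoetherian k (Polynomial k ⧸ Ib b) := by
    rw [isNoetherian_iff]
    exact IsNoetherian.wf (inferInstance : IsNoetherian k (Polynomial k ⧸ Ib b))
  set I := Ib b with hI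
  set Dl : Polynomial k →ₗ[k] Polynomial k := (derivative : Polynomial k →ₗ[k] Polynomial k)
  set S : ℕ → Submodule k (Polynomial k) :=
    fun i => Nat.rec ⊥ (fun _ prev => Submodule.comap Dl (prev ⊔ I)) i with hS
  have hS0 : S 0 = ⊥ := rfl
  have hSsucc : ∀ i, S (i+1) = Submodule.comap Dl (S i ⊔ I) := fun i => rfl
  have hstep : ∀ i, S i ≤ S (i+1) := by
    intro i
    induction i with
    | zero => rw [hS0]; exact bot_le
    | succ i ih =>
      rw [hSsucc i]
      show Submodule.comap Dl (S i ⊔ I) ≤ Submodule.comap Dl (S (i+1) ⊔ I)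
      exact Submodule.comap_mono (sup_le_sup_right ih I)
  have hmonoF : Monotone (fun i => ((S i ⊔ I).map I.mkQ)) := by
    apply monotone_nat_of_le_succ
    intro i
    exact Submodule.map_mono (sup_le_sup_right (hstep i) I)
  obtain ⟨n₀, hn₀⟩ := monotone_stabilizes_iff_noetherian.mpr
    (inferInstance) ⟨fun i => ((S i ⊔ I).map I.mkQ), hmonoF⟩
  have hT : ∀ m, n₀ ≤ m → S m ⊔ I = S n₀ ⊔ I := by
    intro m hm
    have h1 : ((S n₀ ⊔ I).map I.mkQ) = ((S m ⊔ I).map I.mkQ) := hn₀ m hm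
    have h2 : ∀ j, Submodule.comap I.mkQ ((S j ⊔ I).map I.mkQ) = S j ⊔ I := by
      intro j
      rw [Submodule.comap_map_eq, Submodule.ker_mkQ, sup_assoc, sup_idem]
    rw [← h2 m, ← h2 n₀, h1]
  set n := n₀ + 1 with hn
  have hSstab : ∀ i, n ≤ i → S i = S n := by
    intro i hi
    obtain ⟨j, rfl⟩ : ∃ j, i = j + 1 := ⟨i - 1, by omega⟩
    rw [hSsucc, hSsucc, hT j (by omega), hT n₀ le_rfl]
  have hXmem : ∀ m, ((m.factorial : k)⁻¹ • X^m : Polynomial k) ∈ S n := by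
    intro m
    induction m with
    | zero =>
      rw [hSsucc, Submodule.mem_comap]
      have : ((Nat.factorial 0 : k)⁻¹ • X^0 : Polynomial k) = 1 := by simp
      rw [this]
      have : Dl (1 : Polynomial k) = 0 := by simp [Dl]
      rw [this]
      exact Submodule.zero_mem _
    | succ m ih =>
      rw [hSsucc, Submodule.mem_comap]
      have hd : Dl (((m+1).factorial : k)⁻¹ • X^(m+1) : Polynomial k)
          = ((m.factorial : k)⁻¹ • X^m : Polynomial k) := by
        have hdx : Dl ((X : Polynomial k)^(m+1)) = (((m+1 : ℕ) : k)) • X^m := by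
          show derivative ((X : Polynomial k)^(m+1)) = (((m+1 : ℕ) : k)) • X^m
          rw [derivative_X_pow, smul_eq_C_mul]
          simp
        rw [map_smul, hdx, smul_smul]
        congr 1
        rw [Nat.factorial_succ]
        have h1 : ((m.factorial : k)) ≠ 0 := Nat.cast_ne_zero.mpr (Nat.factorial_ne_zero m)
        have h2 : (((m+1 : ℕ) : k)) ≠ 0 := Nat.cast_ne_zero.mpr (Nat.succ_ne_zero m)
        push_cast at h2 ⊢
        field_simp
      rw [hd]
      have : S n ≤ S n₀ ⊔ I := le_trans (le_sup_left) (le_of_eq (hT n (by omega)))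
      exact this ih
  have hextract : ∀ i, ∀ x ∈ S i, ∃ s : ℕ → Polynomial k, s 0 = 0 ∧ s i = x ∧
      ∀ j, 1 ≤ j → j ≤ i → b ∣ (derivative (s j) - s (j-1)) := by
    intro i
    induction i with
    | zero =>
      intro x hx
      rw [hS0, Submodule.mem_bot] at hx
      exact ⟨fun _ => 0, rfl, by rw [hx], fun j h1 h2 => by omega⟩
    | succ i ih =>
      intro x hx
      rw [hSsucc, Submodule.mem_comap] at hx
      obtain ⟨y, hy, z, hz, hyz⟩ := Submodule.mem_sup.mp hx
      obtain ⟨s, hs0, hsi, hsd⟩ := ih y hy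
      refine ⟨Function.update s (i+1) x, ?_, ?_, ?_⟩
      · rw [Function.update_of_ne (by omega) _ _]; exact hs0
      · rw [Function.update_self]
      · intro j h1 h2
        rcases eq_or_lt_of_le h2 with rfl | hj
        · rw [Function.update_self, Function.update_of_ne (by omega) _ _]
          simp only [Nat.add_sub_cancel, hsi]
          have : derivative x - y = z := by
            have : Dl x = y + z := hyz.symm
            simp only [Dl] at this
            rw [this]; ring
          rw [this]
          exact mem_Ib.mp hz
        · rw [Function.update_of_ne (by omega) _ _, Function.update_of_ne (by omega) _ _]
          exact hsd j h1 (by omega)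
  obtain ⟨s, hs0, hsn, hsd⟩ := hextract n _ (hXmem n)
  exact ⟨n, s, by omega, hs0, hsd, hsn⟩

lemma deriv_fact_pow (m : ℕ) :
    derivative (((m+1).factorial : k)⁻¹ • X^(m+1) : Polynomial k)
      = ((m.factorial : k)⁻¹ • X^m : Polynomial k) := by
  have hdx : derivative ((X : Polynomial k)^(m+1)) = (((m+1 : ℕ) : k)) • X^m := by
    rw [derivative_X_pow, smul_eq_C_mul]
    simp
  rw [map_smul, hdx, smul_smul]
  congr 1
  rw [Nat.factorial_succ]
  have h1 : ((m.factorial : k)) ≠ 0 := Nat.cast_ne_zero.mpr (Nat.factorial_ne_zero m)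
  have h2 : (((m+1 : ℕ) : k)) ≠ 0 := Nat.cast_ne_zero.mpr (Nat.succ_ne_zero m)
  push_cast at h2 ⊢
  field_simp

lemma exists_E0 (b : Polynomial k) (hb : b ≠ 0) :
    ∃ e : Module.End k (Polynomial k), e ∈ WeylA k ∧
      (∀ h : Polynomial k, b ∣ derivative (e h)) ∧ e 1 = 1 := by
  obtain ⟨n, s, hn, hs0, hsd, hsn⟩ := exists_seq b hb
  set pp : ℕ → Polynomial k :=
    fun i => (-1:k)^i • ((i.factorial : k)⁻¹ • X^i - s i) with hpp
  set Eop : ℕ → Module.End k (Polynomial k) :=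
    fun j => ∑ i ∈ Finset.range (j+1),
      Algebra.lmul k (Polynomial k) (pp i) * (Dop k)^i with hEop
  have hpp0 : pp 0 = 1 := by simp [hpp, hs0]
  have hppn : pp n = 0 := by simp [hpp, hsn]
  have hppd : ∀ j, j + 1 ≤ n → b ∣ (pp j + derivative (pp (j+1))) := by
    intro j hj
    have hder : derivative (pp (j+1))
        = (-1:k)^(j+1) • ((j.factorial : k)⁻¹ • X^j - derivative (s (j+1))) := by
      show derivative ((-1:k)^(j+1) • (((j+1).factorial : k)⁻¹ • X^(j+1) - s (j+1)))
          = (-1:k)^(j+1) • ((j.factorial : k)⁻¹ • X^j - derivative (s (j+1)))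
      rw [map_smul, map_sub, deriv_fact_pow]
    have hcalc : pp j + derivative (pp (j+1))
        = (-1:k)^j • (derivative (s (j+1)) - s j) := by
      rw [hder]
      show (-1:k)^j • ((j.factorial : k)⁻¹ • X^j - s j)
            + (-1:k)^(j+1) • ((j.factorial : k)⁻¹ • X^j - derivative (s (j+1)))
          = (-1:k)^j • (derivative (s (j+1)) - s j)
      rw [pow_succ]
      module
    rw [hcalc, smul_eq_C_mul]
    have hdvd : b ∣ derivative (s (j+1)) - s j := by
      have := hsd (j+1) (by omega) (by omega)
      simpa using this
    exact Dvd.dvd.mul_left hdvd _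
  have happ : ∀ j h, Eop j h = ∑ i ∈ Finset.range (j+1), pp i * (((Dop k)^i) h) := by
    intro j h
    rw [hEop]
    simp only [LinearMap.coe_sum, Finset.sum_apply, Module.End.mul_apply, lmul_apply']
  have hDpow : ∀ i (h : Polynomial k), ((Dop k)^(i+1)) h = derivative (((Dop k)^i) h) := by
    intro i h
    rw [pow_succ']
    rfl
  have hkey : ∀ j, j ≤ n → ∀ h : Polynomial k,
      b ∣ derivative (Eop j h) - pp j * (((Dop k)^(j+1)) h) := by
    intro j
    induction j with
    | zero =>
      intro _ h
      have h0 : Eop 0 h = pp 0 * h := by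
        rw [happ, Finset.sum_range_one, pow_zero, Module.End.one_apply]
      rw [h0, hpp0, one_mul, hDpow 0 h, pow_zero, Module.End.one_apply, one_mul, sub_self]
      exact dvd_zero b
    | succ j ih =>
      intro hjn h
      have h1 : Eop (j+1) h = Eop j h + pp (j+1) * (((Dop k)^(j+1)) h) := by
        rw [happ, happ, Finset.sum_range_succ]
      have hrw : derivative (Eop (j+1) h) - pp (j+1) * (((Dop k)^(j+2)) h)
          = (derivative (Eop j h) - pp j * (((Dop k)^(j+1)) h))
            + (pp j + derivative (pp (j+1))) * (((Dop k)^(j+1)) h) := by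
        rw [h1, derivative_add, derivative_mul, hDpow (j+1) h]
        ring
      rw [hrw]
      exact dvd_add (ih (by omega) h) ((hppd j hjn).mul_right _)
  refine ⟨Eop n, ?_, ?_, ?_⟩
  · rw [hEop]
    refine Subalgebra.sum_mem _ fun i _ => mul_mem (lmul_mem_weyl _) (pow_mem ?_ i)
    exact Algebra.subset_adjoin (by simp)
  · intro h
    have := hkey n le_rfl h
    rwa [hppn, zero_mul, sub_zero] at this
  · rw [happ]
    rw [Finset.sum_eq_single_of_mem 0 (Finset.mem_range.mpr (by omega))]
    · rw [hpp0, one_mul, pow_zero, Module.End.one_apply]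
    · intro i _ hi
      obtain ⟨i', rfl⟩ : ∃ i', i = i' + 1 := ⟨i - 1, by omega⟩
      have : ((Dop k)^(i'+1)) (1 : Polynomial k) = 0 := by
        rw [pow_succ, Module.End.mul_apply]
        have : Dop k (1 : Polynomial k) = 0 := derivative_one
        rw [this, map_zero]
      rw [this, mul_zero]

end E0

/-- Let `V` be a primary decomposable subspace of `R = k[t]`,
`D(R,V) = {d ∈ A₁ : d(R) ⊆ V}`, `p ∈ k[t]` and `σ = exp(ad p)`.
Then `σ(D(R,V)) = D(R,V)` if and only if `p ∈ S(V)`, i.e. `pV ⊆ V`. -/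
theorem stmt7 {k : Type} [Field k] [CharZero k] (V : Submodule k (Polynomial k))
    (hV : V ≠ ⊥)
    (hpd : ∃ b : Polynomial k, b ≠ 0 ∧ ∀ a : Polynomial k,
        b ∣ derivative a → ∀ v ∈ V, a * v ∈ V)
    (q : Polynomial k) (p : Module.End k (Polynomial k))
    (hp : p = Algebra.lmul k (Polynomial k) q)
    (σ : WeylA k ≃ₐ[k] WeylA k)
    (hσ : ∀ (d : WeylA k) (N : ℕ),
        (adOp p ^ N) (d : Module.End k (Polynomial k)) = 0 →
        (σ d : Module.End k (Polynomial k)) =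
          ∑ n ∈ Finset.range N,
            ((n.factorial : k)⁻¹ • (adOp p ^ n) (d : Module.End k (Polynomial k)))) :
    σ '' {d : WeylA k | ∀ h : Polynomial k, (d : Module.End k (Polynomial k)) h ∈ V}
        = {d : WeylA k | ∀ h : Polynomial k, (d : Module.End k (Polynomial k)) h ∈ V}
      ↔ ∀ v ∈ V, q * v ∈ V := by
  obtain ⟨b, hb, hbV⟩ := hpd
  set D : Set (WeylA k) :=
    {d : WeylA k | ∀ h : Polynomial k, (d : Module.End k (Polynomial k)) h ∈ V} with hD
  constructor
  · -- forward direction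
    intro hσD v hv
    obtain ⟨E0, hE0W, hE0d, hE01⟩ := exists_E0 b hb
    set d0 : Module.End k (Polynomial k) := Algebra.lmul k (Polynomial k) v * E0 with hd0
    have hd0W : d0 ∈ WeylA k := mul_mem (lmul_mem_weyl v) hE0W
    have hd0D : ∀ h : Polynomial k, d0 h ∈ V := by
      intro h
      rw [hd0, Module.End.mul_apply, lmul_apply', mul_comm]
      exact hbV _ (hE0d h) v hv
    set dd : WeylA k := ⟨d0, hd0W⟩ with hdd
    have hmapsto : ∀ x : WeylA k, x ∈ D → σ x ∈ D := by
      intro x hx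
      have : σ x ∈ σ '' D := ⟨x, hx, rfl⟩
      rwa [hσD] at this
    have hiterD : ∀ m : ℕ, (⇑σ)^[m] dd ∈ D := by
      intro m
      induction m with
      | zero => exact hd0D
      | succ m ih =>
        rw [Function.iterate_succ_apply']
        exact hmapsto _ ih
    obtain ⟨N₀, hN₀⟩ := weyl_nil q d0 hd0W
    rw [← hp] at hN₀
    set N := N₀ + 2 with hNdef
    have hN : (adOp p ^ N) d0 = 0 := by
      have hsplit : adOp p ^ N = adOp p ^ 2 * adOp p ^ N₀ := by
        rw [← pow_add]; congr 1; omega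
      rw [hsplit, Module.End.mul_apply, hN₀, map_zero]
    have hform : ∀ m : ℕ, (((⇑σ)^[m] dd : WeylA k) : Module.End k (Polynomial k))
        = (Polynomial.aeval (adOp p) (Pexp ((m : ℕ) : k) N)) d0 := by
      intro m
      induction m with
      | zero =>
        rw [Function.iterate_zero, id_eq, Nat.cast_zero, Pexp_zero_apply _ N (by omega)]
      | succ m ih =>
        rw [Function.iterate_succ_apply']
        set g : WeylA k := (⇑σ)^[m] dd with hg
        have hgN : (adOp p ^ N) (g : Module.End k (Polynomial k)) = 0 := by
          rw [ih]
          exact aeval_nil_absorb (adOp p) (Pexp ((m : ℕ) : k) N) N d0 hN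
        rw [hσ g N hgN]
        have hsum : (∑ n ∈ Finset.range N,
              ((n.factorial : k)⁻¹ • (adOp p ^ n) (g : Module.End k (Polynomial k))))
            = (Polynomial.aeval (adOp p) (Pexp (1:k) N)) (g : Module.End k (Polynomial k)) := by
          rw [aeval_Pexp]
          refine Finset.sum_congr rfl fun n _ => ?_
          rw [one_pow, one_mul]
        rw [hsum, ih, Pexp_comp _ 1 ((m : ℕ) : k) N d0 hN]
        have : (1 : k) + ((m : ℕ) : k) = (((m+1 : ℕ) : ℕ) : k) := by push_cast; ring
        rw [this]
    have hvals : ∀ m : ℕ,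
        (∑ n ∈ Finset.range N, (((m : ℕ) : k)^n * (n.factorial : k)⁻¹)
          • ((adOp p ^ n) d0) 1) ∈ V := by
      intro m
      have hmem := hiterD m 1
      rw [hform m, aeval_Pexp] at hmem
      simpa only [LinearMap.coe_sum, Finset.sum_apply, LinearMap.smul_apply] using hmem
    set c : ℕ → Polynomial k :=
      fun nn => ((nn.factorial : k)⁻¹) • ((adOp p ^ nn) d0) 1 with hc
    set M : Matrix (Fin N) (Fin N) k := Matrix.vandermonde (fun i : Fin N => (i : k)) with hM
    have hdet : M.det ≠ 0 := by
      rw [hM, Matrix.det_vandermonde]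
      refine Finset.prod_ne_zero_iff.mpr fun i _ => Finset.prod_ne_zero_iff.mpr fun j hj => ?_
      rw [Finset.mem_Ioi] at hj
      have hij : (i : ℕ) < (j : ℕ) := hj
      have : ((i : ℕ) : k) ≠ ((j : ℕ) : k) := by
        intro hEq
        exact absurd (Nat.cast_injective hEq) (by omega)
      exact sub_ne_zero.mpr (Ne.symm this)
    have hMunit : IsUnit M.det := isUnit_iff_ne_zero.mpr hdet
    have hy : ∀ mI : Fin N, (∑ j : Fin N, M mI j • c (j : ℕ)) ∈ V := by
      intro mI
      have hv2 := hvals (mI : ℕ)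
      have heq : (∑ n ∈ Finset.range N, ((((mI : ℕ) : ℕ) : k)^n * (n.factorial : k)⁻¹)
            • ((adOp p ^ n) d0) 1)
          = ∑ j : Fin N, M mI j • c (j : ℕ) := by
        rw [← Fin.sum_univ_eq_sum_range (fun n =>
          ((((mI : ℕ) : ℕ) : k)^n * (n.factorial : k)⁻¹) • ((adOp p ^ n) d0) 1) N]
        refine Finset.sum_congr rfl fun j _ => ?_
        simp only [hM, hc, Matrix.vandermonde_apply]
        rw [smul_smul]
      rw [heq] at hv2
      exact hv2
    have hcV : ∀ jj : Fin N, c (jj : ℕ) ∈ V := by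
      intro jj
      have hrepr : c (jj : ℕ) = ∑ mI : Fin N, (M⁻¹ jj mI) • (∑ j : Fin N, M mI j • c (j : ℕ)) := by
        have step1 : ∀ mI : Fin N, (M⁻¹ jj mI) • (∑ j : Fin N, M mI j • c (j : ℕ))
            = ∑ j : Fin N, (M⁻¹ jj mI * M mI j) • c (j : ℕ) := by
          intro mI
          rw [Finset.smul_sum]
          refine Finset.sum_congr rfl fun j _ => ?_
          rw [smul_smul]
        rw [Finset.sum_congr rfl fun mI _ => step1 mI, Finset.sum_comm]
        have step2 : ∀ j : Fin N, (∑ mI : Fin N, (M⁻¹ jj mI * M mI j) • c (j : ℕ))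
            = ((M⁻¹ * M) jj j) • c (j : ℕ) := by
          intro j
          rw [Matrix.mul_apply, Finset.sum_smul]
        rw [Finset.sum_congr rfl fun j _ => step2 j]
        rw [Matrix.nonsing_inv_mul M hMunit]
        rw [Finset.sum_congr rfl fun j _ => by
          rw [Matrix.one_apply, ite_smul, one_smul, zero_smul]]
        rw [Finset.sum_ite_eq (Finset.univ : Finset (Fin N)) jj (fun j : Fin N => c (j : ℕ))]
        simp
      rw [hrepr]
      exact Submodule.sum_mem _ fun mI _ => Submodule.smul_mem _ _ (hy mI)
    have h1V : ((adOp p) d0) 1 ∈ V := by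
      have := hcV ⟨1, by omega⟩
      simp only [hc] at this
      simpa using this
    have htrans : ((adOp p) d0) 1 = v * E0 q - q * v := by
      have hp1 : p (1 : Polynomial k) = q := by rw [hp, lmul_apply', mul_one]
      have hd01 : d0 (1 : Polynomial k) = v := by
        rw [hd0, Module.End.mul_apply, lmul_apply', hE01, mul_one]
      have hd0q : d0 q = v * E0 q := by rw [hd0, Module.End.mul_apply, lmul_apply']
      have h1 : (d0 * p) 1 = v * E0 q := by rw [Module.End.mul_apply, hp1, hd0q]
      have h2 : (p * d0) 1 = q * v := by rw [Module.End.mul_apply, hd01, hp, lmul_apply']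
      rw [adOp_apply, LinearMap.sub_apply, h1, h2]
    have hfin : q * v = v * E0 q - ((adOp p) d0) 1 := by
      rw [htrans]; ring
    rw [hfin]
    refine sub_mem ?_ h1V
    have := hd0D q
    rw [hd0, Module.End.mul_apply, lmul_apply'] at this
    exact this
  · -- backward direction
    intro hq
    have stab : ∀ (f : Module.End k (Polynomial k)), (∀ h : Polynomial k, f h ∈ V) →
        ∀ (nn : ℕ) (h : Polynomial k), ((adOp p ^ nn) f) h ∈ V := by
      intro f hf nn
      induction nn with
      | zero => intro h; simpa using hf h
      | succ nn ih =>
        intro h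
        have hpapp : ∀ x : Polynomial k, p x = q * x := fun x => by rw [hp, lmul_apply']
        rw [adOp_pow_succ, adOp_apply, LinearMap.sub_apply,
          Module.End.mul_apply, Module.End.mul_apply, hpapp, hpapp]
        exact sub_mem (ih _) (hq _ (ih h))
    apply Set.Subset.antisymm
    · rintro x ⟨d, hd, rfl⟩
      intro h
      obtain ⟨N, hN⟩ := weyl_nil q (d : Module.End k (Polynomial k)) d.2
      rw [← hp] at hN
      rw [hσ d N hN]
      simp only [LinearMap.coe_sum, Finset.sum_apply, LinearMap.smul_apply]
      exact Submodule.sum_mem _ fun nn _ => Submodule.smul_mem _ _ (stab _ hd nn h)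
    · intro d hd
      refine ⟨σ.symm d, ?_, σ.apply_symm_apply d⟩
      obtain ⟨N₀, hN₀⟩ := weyl_nil q (σ.symm d : Module.End k (Polynomial k)) (σ.symm d).2
      rw [← hp] at hN₀
      set N := N₀ + 1 with hNdef
      have hNe : (adOp p ^ N) (σ.symm d : Module.End k (Polynomial k)) = 0 := by
        rw [hNdef, pow_succ', Module.End.mul_apply, hN₀, map_zero]
      have hσd : (d : Module.End k (Polynomial k))
          = (Polynomial.aeval (adOp p) (Pexp (1:k) N)) (σ.symm d : Module.End k (Polynomial k)) := by
        have hh := hσ (σ.symm d) N hNe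
        rw [σ.apply_symm_apply] at hh
        rw [hh, aeval_Pexp]
        refine Finset.sum_congr rfl fun nn _ => ?_
        rw [one_pow, one_mul]
      have hrecover : (σ.symm d : Module.End k (Polynomial k))
          = (Polynomial.aeval (adOp p) (Pexp (-1:k) N)) (d : Module.End k (Polynomial k)) := by
        rw [hσd, Pexp_comp _ (-1) 1 N _ hNe]
        have : (-1 : k) + 1 = 0 := by ring
        rw [this, Pexp_zero_apply _ N (by omega)]
      intro h
      rw [hrecover, aeval_Pexp]
      simp only [LinearMap.coe_sum, Finset.sum_apply, LinearMap.smul_apply]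
      exact Submodule.sum_mem _ fun nn _ => Submodule.smul_mem _ _ (stab _ hd nn h)
end

section
/- Let V be a primary decomposable irreducible subspace of R = k[t] (p.d. and not contained in a proper ideal of R) and m = dim_k R/V. Then every nonzero d ∈ D(R,V) satisfies deg_t(d) ≥ m, where deg_t is the degree of d written as a polynomial in t with coefficients in k(∂) (equivalently the t-degree in k(∂)[t]). -/
open Polynomial

/-- If a subspace `V ⊆ k[t]` contains a polynomial of exact degree `j` for every
`j` outside a finite set `S`, then `dim k[t]/V ≤ |S|`. -/
lemma aux_span_bound {k : Type} [Field k] (V : Submodule k (Polynomial k)) (S : Finset ℕ)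
    (hgood : ∀ j, j ∉ S → ∃ q, q ∈ V ∧ q ≠ 0 ∧ q.natDegree = j) :
    Module.finrank k (Polynomial k ⧸ V) ≤ S.card := by
  classical
  set T : Finset (Polynomial k) := S.image (fun j => (X : Polynomial k) ^ j) with hT
  set M : Submodule k (Polynomial k) := V ⊔ Submodule.span k (T : Set (Polynomial k)) with hM
  have key : ∀ N, ∀ p : Polynomial k, p.natDegree < N → p ∈ M := by
    intro N
    induction N with
    | zero => intro p hp; exact absurd hp (Nat.not_lt_zero _)
    | succ N ih =>
      intro p hp
      by_cases hp0 : p = 0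
      · simp [hp0]
      obtain ⟨g, hgM, hg0, hgdeg⟩ : ∃ g, g ∈ M ∧ g ≠ 0 ∧ g.natDegree = p.natDegree := by
        by_cases hjS : p.natDegree ∈ S
        · refine ⟨X ^ p.natDegree, ?_, pow_ne_zero _ X_ne_zero, natDegree_X_pow _⟩
          exact Submodule.mem_sup_right (Submodule.subset_span
            (by rw [hT, Finset.coe_image]; exact Set.mem_image_of_mem _ hjS))
        · obtain ⟨q, hqV, hq0, hqdeg⟩ := hgood _ hjS
          exact ⟨q, Submodule.mem_sup_left hqV, hq0, hqdeg⟩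
      set u : k := p.leadingCoeff / g.leadingCoeff with hu
      set r : Polynomial k := p - u • g with hr
      have hdegr : r.degree < (p.natDegree : WithBot ℕ) := by
        refine (Polynomial.degree_lt_iff_coeff_zero _ _).2 ?_
        intro i hi
        have hi' : p.natDegree ≤ i := by exact_mod_cast hi
        rw [hr, Polynomial.coeff_sub, Polynomial.coeff_smul, smul_eq_mul]
        rcases eq_or_lt_of_le hi' with h | h
        · rw [← h]
          have hgc : g.coeff p.natDegree = g.leadingCoeff := by
            rw [Polynomial.leadingCoeff, hgdeg]
          rw [hgc, hu, div_mul_cancel₀ _ (Polynomial.leadingCoeff_ne_zero.2 hg0),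
            Polynomial.leadingCoeff, sub_self]
        · rw [Polynomial.coeff_eq_zero_of_natDegree_lt h,
            Polynomial.coeff_eq_zero_of_natDegree_lt (hgdeg ▸ h), mul_zero, sub_zero]
      by_cases hr0 : r = 0
      · have : p = u • g := by
          have := hr ▸ hr0
          linear_combination (norm := module) this
        rw [this]; exact M.smul_mem _ hgM
      · have h1 : r.natDegree < p.natDegree :=
          (Polynomial.natDegree_lt_iff_degree_lt hr0).2 hdegr
        have hrM : r ∈ M := ih r (by omega)
        have : p = r + u • g := by rw [hr]; ring
        rw [this]; exact M.add_mem hrM (M.smul_mem _ hgM)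
  have hMtop : M = ⊤ := by
    rw [eq_top_iff]; intro p _; exact key (p.natDegree + 1) p (Nat.lt_succ_self _)
  have hbot : Submodule.map V.mkQ V = ⊥ := by
    rw [eq_bot_iff]
    rintro x ⟨v, hv, rfl⟩
    simp only [Submodule.mem_bot, Submodule.mkQ_apply, Submodule.Quotient.mk_eq_zero]
    exact hv
  have h2 : Submodule.span k (V.mkQ '' (T : Set (Polynomial k))) = ⊤ := by
    have h := congrArg (Submodule.map V.mkQ) hMtop
    rw [hM, Submodule.map_sup, Submodule.map_span, Submodule.map_top, Submodule.range_mkQ,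
      hbot, bot_sup_eq] at h
    exact h
  have h3 : Module.finrank k (Polynomial k ⧸ V) ≤ (T.image V.mkQ).card := by
    have hspan : Submodule.span k ((T.image V.mkQ : Finset _) : Set (Polynomial k ⧸ V)) = ⊤ := by
      rw [Finset.coe_image]; exact h2
    have h4 := finrank_span_finset_le_card (R := k) (T.image V.mkQ)
    rw [Set.finrank, hspan, finrank_top] at h4
    exact h4
  calc Module.finrank k (Polynomial k ⧸ V) ≤ (T.image V.mkQ).card := h3
    _ ≤ T.card := Finset.card_image_le
    _ ≤ S.card := hT ▸ Finset.card_image_le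

/-- If `V` is a p.d.i. subspace of `R = k[t]` with `m = dim_k R/V`, then every
nonzero `d ∈ D(R,V)` has `t`-degree at least `m`: `d` admits no expression
`d = Σ_{i<m} tⁱ aᵢ(∂)` with `aᵢ ∈ k[∂]`. -/
theorem stmt13 {k : Type} [Field k] [CharZero k] (V : Submodule k (Polynomial k))
    (hV : V ≠ ⊥)
    (hpd : ∃ b : Polynomial k, b ≠ 0 ∧ ∀ a : Polynomial k,
        b ∣ derivative a → ∀ v ∈ V, a * v ∈ V)
    (hirr : ∀ J : Ideal (Polynomial k), (V : Set (Polynomial k)) ⊆ J → J = ⊤)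
    (d : Module.End k (Polynomial k)) (hdW : d ∈ WeylA k) (hd0 : d ≠ 0)
    (hdV : ∀ h : Polynomial k, d h ∈ V) :
    ¬ ∃ a : ℕ → Polynomial k,
        d = ∑ i ∈ Finset.range (Module.finrank k (Polynomial k ⧸ V)),
              Tmul k ^ i * Polynomial.aeval (Dop k) (a i) := by
  classical
  rintro ⟨a, hda⟩
  set m := Module.finrank k (Polynomial k ⧸ V) with hm
  set c : ℕ → ℕ → k := fun i l => (a i).coeff l with hc
  set L : ℕ := (Finset.range m).sup (fun i => (a i).natDegree) with hLdef
  set F : Finset (ℕ × ℕ) := Finset.range m ×ˢ Finset.range (L + 1) with hF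
  -- key evaluation of d on monomials
  have key : ∀ n : ℕ, d ((X : Polynomial k) ^ n)
      = ∑ p ∈ F, (c p.1 p.2 * (n.descFactorial p.2 : k)) •
          (X : Polynomial k) ^ (p.1 + (n - p.2)) := by
    intro n
    rw [hda, hF, Finset.sum_product, LinearMap.sum_apply]
    refine Finset.sum_congr rfl ?_
    intro i hi
    rw [Module.End.mul_apply]
    have h1 : (Polynomial.aeval (Dop k) (a i)) ((X : Polynomial k) ^ n)
        = ∑ l ∈ Finset.range (L + 1),
            (c i l * (n.descFactorial l : k)) • (X : Polynomial k) ^ (n - l) := by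
      rw [Polynomial.aeval_endomorphism]
      have hdegL : (a i).natDegree < L + 1 :=
        Nat.lt_succ_of_le (Finset.le_sup (f := fun i => (a i).natDegree) hi)
      rw [Polynomial.sum_over_range' (a i)
        (f := fun l b => b • ((Dop k) ^ l) ((X : Polynomial k) ^ n))
        (fun n' => zero_smul _ _) (L + 1) hdegL]
      refine Finset.sum_congr rfl ?_
      intro l _
      rw [Module.End.pow_apply]
      show (a i).coeff l • (⇑(Polynomial.derivative (R := k)))^[l] ((X : Polynomial k) ^ n) = _
      rw [Polynomial.iterate_derivative_X_pow_eq_smul, smul_smul]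
    rw [h1, map_sum]
    refine Finset.sum_congr rfl ?_
    intro l _
    rw [LinearMap.map_smul]
    congr 1
    have h2 : (Tmul k) ^ i = Algebra.lmul k (Polynomial k) ((X : Polynomial k) ^ i) := by
      rw [show Tmul k = Algebra.lmul k (Polynomial k) X from rfl, ← map_pow]
    rw [h2]
    show (X : Polynomial k) ^ i * (X : Polynomial k) ^ (n - l) = _
    rw [← pow_add]
  have coeff_key : ∀ n j : ℕ, (d ((X : Polynomial k) ^ n)).coeff j
      = ∑ p ∈ F, if j = p.1 + (n - p.2) then c p.1 p.2 * (n.descFactorial p.2 : k) else 0 := by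
    intro n j
    rw [key n, Polynomial.finset_sum_coeff]
    refine Finset.sum_congr rfl ?_
    intro p _
    rw [Polynomial.coeff_smul, Polynomial.coeff_X_pow, smul_eq_mul, mul_ite, mul_one, mul_zero]
  -- the set of nonzero coefficients
  set F' : Finset (ℕ × ℕ) := F.filter (fun p => c p.1 p.2 ≠ 0) with hF'
  have hF'ne : F'.Nonempty := by
    rw [Finset.nonempty_iff_ne_empty]
    intro hemp
    apply hd0
    rw [hda]
    refine Finset.sum_eq_zero ?_
    intro i hi
    have hai : a i = 0 := by
      ext l
      rw [Polynomial.coeff_zero]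
      by_cases hl : l ≤ L
      · by_contra hne
        have hmem : (i, l) ∈ F' := by
          rw [hF', Finset.mem_filter]
          exact ⟨Finset.mem_product.2 ⟨hi, Finset.mem_range.2 (Nat.lt_succ_of_le hl)⟩, hne⟩
        rw [hemp] at hmem
        exact absurd hmem (Finset.notMem_empty _)
      · have hle : (a i).natDegree ≤ L := by
          rw [hLdef]; exact Finset.le_sup (f := fun i => (a i).natDegree) hi
        exact Polynomial.coeff_eq_zero_of_natDegree_lt (by omega)
    rw [hai, map_zero, mul_zero]
  set ε : ℤ := F'.sup' hF'ne (fun p => (p.1 : ℤ) - p.2) with hε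
  have hub : ∀ p ∈ F', (p.1 : ℤ) - p.2 ≤ ε :=
    fun p hp => Finset.le_sup' (f := fun p => (p.1 : ℤ) - p.2) hp
  set G : Finset (ℕ × ℕ) := F'.filter (fun p => (p.1 : ℤ) - p.2 = ε) with hG
  have hGne : G.Nonempty := by
    obtain ⟨p, hp, hpe⟩ := Finset.exists_mem_eq_sup' hF'ne (fun p => (p.1 : ℤ) - p.2)
    exact ⟨p, Finset.mem_filter.2 ⟨hp, hpe.symm⟩⟩
  set L₀ : ℕ := G.sup' hGne (fun p => p.2) with hL₀
  obtain ⟨p₀, hp₀G, hp₀2⟩ : ∃ p ∈ G, p.2 = L₀ := by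
    obtain ⟨p, hp, hpe⟩ := Finset.exists_mem_eq_sup' hGne (fun p => p.2)
    exact ⟨p, hp, hpe.symm⟩
  have hp₀F' : p₀ ∈ F' := (Finset.mem_filter.1 hp₀G).1
  have hp₀c : c p₀.1 p₀.2 ≠ 0 := (Finset.mem_filter.1 hp₀F').2
  have hp₀ε : (p₀.1 : ℤ) - p₀.2 = ε := (Finset.mem_filter.1 hp₀G).2
  have hl2le : ∀ p ∈ G, p.2 ≤ L₀ := fun p hp => Finset.le_sup' (f := fun p => p.2) hp
  have hGdet : ∀ p ∈ G, ∀ q ∈ G, p.2 = q.2 → p = q := by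
    intro p hp q hq h2
    have hpε : (p.1 : ℤ) - (p.2 : ℤ) = ε := (Finset.mem_filter.1 hp).2
    have hqε : (q.1 : ℤ) - (q.2 : ℤ) = ε := (Finset.mem_filter.1 hq).2
    have h1 : p.1 = q.1 := by omega
    exact Prod.ext_iff.2 ⟨h1, h2⟩
  -- the leading polynomial P
  set P : Polynomial k := ∑ p ∈ G, Polynomial.C (c p.1 p.2) * descPochhammer k p.2 with hP
  have hPcoeff : P.coeff L₀ = c p₀.1 p₀.2 := by
    rw [hP, Polynomial.finset_sum_coeff, Finset.sum_eq_single p₀]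
    · have h1 : (descPochhammer k L₀).coeff L₀ = 1 := by
        have h2 := (monic_descPochhammer k L₀).coeff_natDegree
        rwa [descPochhammer_natDegree] at h2
      rw [Polynomial.coeff_C_mul, hp₀2, h1, mul_one]
    · intro q hqG hqne
      have hlt : q.2 < L₀ :=
        lt_of_le_of_ne (hl2le q hqG)
          (fun h => hqne (hGdet q hqG p₀ hp₀G (h.trans hp₀2.symm)))
      rw [Polynomial.coeff_C_mul, Polynomial.coeff_eq_zero_of_natDegree_lt
        (by rw [descPochhammer_natDegree]; exact hlt), mul_zero]
    · intro h; exact absurd hp₀G h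
  have hP0 : P ≠ 0 := fun h => hp₀c (by rw [← hPcoeff, h, Polynomial.coeff_zero])
  have hPdeg : P.natDegree ≤ L₀ := by
    refine Polynomial.natDegree_sum_le_of_forall_le _ _ ?_
    intro p hp
    refine le_trans (Polynomial.natDegree_mul_le) ?_
    rw [Polynomial.natDegree_C, descPochhammer_natDegree, zero_add]
    exact hl2le p hp
  have hPeval : ∀ n : ℕ, P.eval (n : k) = ∑ p ∈ G, c p.1 p.2 * (n.descFactorial p.2 : k) := by
    intro n
    rw [hP, Polynomial.eval_finset_sum]
    refine Finset.sum_congr rfl ?_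
    intro p _
    rw [Polynomial.eval_mul, Polynomial.eval_C, descPochhammer_eval_eq_descFactorial]
  set E : ℕ := ε.toNat with hE
  set Nn : ℕ := (-ε).toNat with hNn
  have hENn : (E : ℤ) - (Nn : ℤ) = ε := by omega
  have hp2ge : ∀ p ∈ G, Nn ≤ p.2 := by
    intro p hp
    have hpε : (p.1 : ℤ) - (p.2 : ℤ) = ε := (Finset.mem_filter.1 hp).2
    omega
  have hauto : ∀ n : ℕ, n < Nn → P.eval (n : k) = 0 := by
    intro n hn
    rw [hPeval]
    refine Finset.sum_eq_zero ?_
    intro p hp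
    have : n < p.2 := lt_of_lt_of_le hn (hp2ge p hp)
    rw [Nat.descFactorial_eq_zero_iff_lt.2 this, Nat.cast_zero, mul_zero]
  -- high coefficients vanish
  have main_hi : ∀ n j' : ℕ, (n : ℤ) + ε < (j' : ℤ) →
      (d ((X : Polynomial k) ^ n)).coeff j' = 0 := by
    intro n j' hj'
    rw [coeff_key]
    refine Finset.sum_eq_zero ?_
    intro p hpF
    rw [ite_eq_right_iff]
    intro hexp
    by_cases hln : p.2 ≤ n
    · have h1 : ε < (p.1 : ℤ) - p.2 := by omega
      have h2 : p ∉ F' := fun hmem => absurd (hub p hmem) (not_le.2 h1)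
      have hc0 : c p.1 p.2 = 0 := by
        by_contra h
        exact h2 (Finset.mem_filter.2 ⟨hpF, h⟩)
      rw [hc0, zero_mul]
    · rw [Nat.descFactorial_eq_zero_iff_lt.2 (not_le.1 hln), Nat.cast_zero, mul_zero]
  -- the coefficient at degree n + ε equals P(n)
  have main_eq : ∀ n j : ℕ, (j : ℤ) = (n : ℤ) + ε →
      (d ((X : Polynomial k) ^ n)).coeff j = P.eval (n : k) := by
    intro n j hj
    rw [coeff_key, hPeval]
    have lhs : ∑ p ∈ F, (if j = p.1 + (n - p.2) then c p.1 p.2 * (n.descFactorial p.2 : k) else 0)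
        = ∑ p ∈ F, (if (p.1 : ℤ) - p.2 = ε then c p.1 p.2 * (n.descFactorial p.2 : k) else 0) := by
      refine Finset.sum_congr rfl ?_
      intro p _
      by_cases hln : p.2 ≤ n
      · exact if_congr (by omega) rfl rfl
      · have hdf : ((n.descFactorial p.2 : ℕ) : k) = 0 := by
          rw [Nat.descFactorial_eq_zero_iff_lt.2 (not_le.1 hln), Nat.cast_zero]
        simp [hdf]
    rw [lhs, ← Finset.sum_filter]
    symm
    refine Finset.sum_subset ?_ ?_
    · intro p hp
      rw [Finset.mem_filter]
      exact ⟨(Finset.mem_filter.1 ((Finset.mem_filter.1 hp).1)).1, (Finset.mem_filter.1 hp).2⟩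
    · intro p hpF hpG
      have hε' := (Finset.mem_filter.1 hpF).2
      have h2 : p ∉ F' := fun h => hpG (Finset.mem_filter.2 ⟨h, hε'⟩)
      have hc0 : c p.1 p.2 = 0 := by
        by_contra h
        exact h2 (Finset.mem_filter.2 ⟨(Finset.mem_filter.1 hpF).1, h⟩)
      rw [hc0, zero_mul]
  -- good degrees: exact-degree elements of V
  have hgoodn : ∀ n j : ℕ, (j : ℤ) = (n : ℤ) + ε → P.eval (n : k) ≠ 0 →
      ∃ q, q ∈ V ∧ q ≠ 0 ∧ q.natDegree = j := by
    intro n j hj hne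
    have hcj : (d ((X : Polynomial k) ^ n)).coeff j ≠ 0 := by
      rw [main_eq n j hj]; exact hne
    refine ⟨d (X ^ n), hdV _, fun h => hcj (by rw [h, Polynomial.coeff_zero]), ?_⟩
    refine le_antisymm ?_ (Polynomial.le_natDegree_of_ne_zero hcj)
    refine Polynomial.natDegree_le_iff_coeff_eq_zero.2 ?_
    intro j' hj'
    exact main_hi n j' (by omega)
  -- natural roots of P
  set S₀ : Finset ℕ := P.roots.toFinset.preimage (Nat.cast : ℕ → k)
    (Nat.cast_injective.injOn) with hS₀
  have hS₀mem : ∀ n : ℕ, n ∈ S₀ ↔ P.eval (n : k) = 0 := by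
    intro n
    rw [hS₀, Finset.mem_preimage, Multiset.mem_toFinset, Polynomial.mem_roots hP0]
    rfl
  have hS₀card : S₀.card ≤ L₀ := by
    have h1 : S₀.image (Nat.cast : ℕ → k) ⊆ P.roots.toFinset := by
      intro x hx
      obtain ⟨n, hn, rfl⟩ := Finset.mem_image.1 hx
      exact Finset.mem_preimage.1 hn
    calc S₀.card = (S₀.image (Nat.cast : ℕ → k)).card :=
          (Finset.card_image_of_injective _ Nat.cast_injective).symm
      _ ≤ P.roots.toFinset.card := Finset.card_le_card h1
      _ ≤ Multiset.card P.roots := Multiset.toFinset_card_le _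
      _ ≤ P.natDegree := Polynomial.card_roots' P
      _ ≤ L₀ := hPdeg
  have hrangeS₀ : Finset.range Nn ⊆ S₀ := by
    intro n hn
    rw [hS₀mem]
    exact hauto n (Finset.mem_range.1 hn)
  set S : Finset ℕ := Finset.range E ∪ (S₀ \ Finset.range Nn).image (fun n => n + E - Nn)
    with hS
  have hScard : S.card ≤ p₀.1 := by
    have h1 : S.card ≤ E + (S₀.card - Nn) := by
      calc S.card ≤ (Finset.range E).card + ((S₀ \ Finset.range Nn).image
            (fun n => n + E - Nn)).card := Finset.card_union_le _ _
        _ ≤ E + (S₀ \ Finset.range Nn).card := by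
            rw [Finset.card_range]
            exact Nat.add_le_add_left Finset.card_image_le _
        _ = E + (S₀.card - Nn) := by rw [Finset.card_sdiff_of_subset hrangeS₀, Finset.card_range]
    have h2 : Nn ≤ L₀ := hp₀2 ▸ hp2ge p₀ hp₀G
    have h3 : (p₀.1 : ℤ) = (L₀ : ℤ) + (E : ℤ) - (Nn : ℤ) := by
      rw [← hp₀2]; omega
    omega
  have hp₀m : p₀.1 < m := by
    have hmemF : p₀ ∈ F := (Finset.mem_filter.1 hp₀F').1
    rw [hF] at hmemF
    exact Finset.mem_range.1 (Finset.mem_product.1 hmemF).1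
  have hgood : ∀ j, j ∉ S → ∃ q, q ∈ V ∧ q ≠ 0 ∧ q.natDegree = j := by
    intro j hjS
    have hjE : E ≤ j := by
      by_contra h
      exact hjS (Finset.mem_union_left _ (Finset.mem_range.2 (not_le.1 h)))
    set n : ℕ := j + Nn - E with hn
    have hjn : (j : ℤ) = (n : ℤ) + ε := by omega
    have hnS₀ : n ∉ S₀ := by
      intro hmem
      refine hjS (Finset.mem_union_right _ (Finset.mem_image.2 ⟨n, ?_, ?_⟩))
      · rw [Finset.mem_sdiff]
        exact ⟨hmem, by rw [Finset.mem_range]; omega⟩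
      · omega
    exact hgoodn n j hjn (fun h => hnS₀ ((hS₀mem n).2 h))
  have hfin := aux_span_bound V S hgood
  rw [← hm] at hfin
  omega
end

section
/- Let V be a p.d.i. subspace of R = k[t] and f ∈ D(R,V) a nonzero element of minimal t-degree. Then f(R) = V, i.e. the image of k[t] under the differential operator f is exactly V. -/
open Polynomial

noncomputable def Phi (k : Type) [Field k] (M : ℕ) (a : ℕ → Polynomial k) :
    Module.End k (Polynomial k) :=
  ∑ i ∈ Finset.range (M + 1), Tmul k ^ i * Polynomial.aeval (Dop k) (a i)

variable {k : Type} [Field k]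

lemma Tmul_apply (p : Polynomial k) : Tmul k p = X * p := rfl

lemma Dop_apply (p : Polynomial k) : Dop k p = derivative p := rfl

lemma Dop_pow_apply (i : ℕ) (p : Polynomial k) : (Dop k ^ i) p = derivative^[i] p :=
  Module.End.pow_apply _ i p

lemma Phi_pad {M M' : ℕ} (h : M ≤ M') (a : ℕ → Polynomial k) :
    Phi k M a = Phi k M' (fun i => if i ≤ M then a i else 0) := by
  unfold Phi
  rw [← Finset.sum_subset (Finset.range_subset_range.2 (by omega) :
      Finset.range (M+1) ⊆ Finset.range (M'+1))]
  · exact Finset.sum_congr rfl fun i hi => by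
      simp only [Finset.mem_range] at hi
      dsimp only
      rw [if_pos (by omega)]
  · intro i _ hi
    simp only [Finset.mem_range, not_lt] at hi
    dsimp only
    rw [if_neg (by omega), map_zero, mul_zero]

lemma Phi_add (M : ℕ) (a b : ℕ → Polynomial k) :
    Phi k M (fun i => a i + b i) = Phi k M a + Phi k M b := by
  unfold Phi
  rw [← Finset.sum_add_distrib]
  exact Finset.sum_congr rfl fun i _ => by rw [map_add, mul_add]

lemma Phi_sub (M : ℕ) (a b : ℕ → Polynomial k) :
    Phi k M (fun i => a i - b i) = Phi k M a - Phi k M b := by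
  unfold Phi
  rw [← Finset.sum_sub_distrib]
  exact Finset.sum_congr rfl fun i _ => by rw [map_sub, mul_sub]

lemma Phi_fsum {ι : Type} (s : Finset ι) (M : ℕ) (g : ι → ℕ → Polynomial k) :
    Phi k M (fun i => ∑ j ∈ s, g j i) = ∑ j ∈ s, Phi k M (g j) := by
  unfold Phi
  rw [Finset.sum_comm]
  exact Finset.sum_congr rfl fun i _ => by rw [map_sum, Finset.mul_sum]

lemma Phi_mul_aeval (M : ℕ) (a : ℕ → Polynomial k) (γ : Polynomial k) :
    Phi k M a * aeval (Dop k) γ = Phi k M (fun i => a i * γ) := by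
  unfold Phi
  rw [Finset.sum_mul]
  exact Finset.sum_congr rfl fun i _ => by rw [map_mul, mul_assoc]

lemma Tpow_mul_Phi (j M : ℕ) (a : ℕ → Polynomial k) :
    Tmul k ^ j * Phi k M a = Phi k (j + M) (fun i => if j ≤ i then a (i - j) else 0) := by
  unfold Phi
  rw [Finset.mul_sum]
  have hsub : Finset.Ico j (j + M + 1) ⊆ Finset.range (j + M + 1) := by
    intro i hi; simp at hi ⊢; omega
  rw [← Finset.sum_subset hsub (fun i hi hni => by
    simp only [Finset.mem_range] at hi
    simp only [Finset.mem_Ico, not_and, not_lt] at hni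
    dsimp only
    rw [if_neg (by omega), map_zero, mul_zero])]
  rw [Finset.sum_Ico_eq_sum_range]
  have : j + M + 1 - j = M + 1 := by omega
  rw [this]
  exact Finset.sum_congr rfl fun i _ => by
    dsimp only
    rw [if_pos (by omega), Nat.add_sub_cancel_left, ← mul_assoc, ← pow_add]


variable {k : Type} [Field k]

lemma Dop_mul_Tmul : Dop k * Tmul k = Tmul k * Dop k + 1 := by
  apply LinearMap.ext
  intro p
  show Dop k (Tmul k p) = Tmul k (Dop k p) + p
  rw [Tmul_apply, Dop_apply, Dop_apply, Tmul_apply, derivative_mul, derivative_X]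
  ring

lemma Dpow_mul_Tmul (n : ℕ) :
    Dop k ^ (n + 1) * Tmul k = Tmul k * Dop k ^ (n + 1) + (n + 1) • Dop k ^ n := by
  induction n with
  | zero =>
    simp only [zero_add, pow_one, pow_zero, one_smul]
    exact Dop_mul_Tmul
  | succ m ih =>
    have h : Dop k ^ (m + 2) * Tmul k = Dop k * (Dop k ^ (m + 1) * Tmul k) := by
      rw [← mul_assoc, ← pow_succ']
    rw [h, ih, mul_add, ← mul_assoc, Dop_mul_Tmul, add_mul, one_mul, mul_assoc, ← pow_succ',
      mul_smul_comm, ← pow_succ', succ_nsmul (Dop k ^ (m + 1)) (m + 1)]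
    abel

lemma aeval_mul_Tmul (γ : Polynomial k) :
    aeval (Dop k) γ * Tmul k = Tmul k * aeval (Dop k) γ + aeval (Dop k) (derivative γ) := by
  induction γ using Polynomial.induction_on' with
  | add p q hp hq =>
    simp only [map_add, add_mul, hp, hq, derivative_add, mul_add]
    abel
  | monomial n c =>
    cases n with
    | zero =>
      simp [aeval_monomial, Algebra.commutes c (Tmul k)]
    | succ m =>
      rw [aeval_monomial, derivative_monomial, aeval_monomial, mul_assoc, Dpow_mul_Tmul,
        mul_add, ← mul_assoc, Algebra.commutes c (Tmul k), mul_assoc]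
      congr 1
      · rw [mul_smul_comm, map_mul, map_natCast]
        have h2 : m + 1 - 1 = m := by omega
        rw [h2, mul_assoc, ← nsmul_eq_mul ((m:ℕ)+1) (Dop k ^ m), mul_smul_comm]




variable {k : Type} [Field k]

lemma Phi_mul_Tmul (j : ℕ) (e : ℕ → Polynomial k) :
    ∃ e' : ℕ → Polynomial k, e' (j + 1) = e j ∧ Phi k j e * Tmul k = Phi k (j + 1) e' := by
  have h1 : Phi k j e * Tmul k
      = Tmul k * Phi k j e + Phi k j (fun i => derivative (e i)) := by
    unfold Phi
    rw [Finset.sum_mul, Finset.mul_sum, ← Finset.sum_add_distrib]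
    refine Finset.sum_congr rfl fun i _ => ?_
    rw [mul_assoc, aeval_mul_Tmul, mul_add, ← mul_assoc, ← mul_assoc,
      pow_mul_comm' (Tmul k) i]
  have h2 : Tmul k * Phi k j e = Phi k (j + 1) (fun i => if 1 ≤ i then e (i - 1) else 0) := by
    have := Tpow_mul_Phi (k := k) 1 j e
    rw [pow_one] at this
    rw [this]
    congr 1
    omega
  have h3 : Phi k j (fun i => derivative (e i))
      = Phi k (j + 1) (fun i => if i ≤ j then derivative (e i) else 0) :=
    Phi_pad (by omega) _
  refine ⟨fun i => (if 1 ≤ i then e (i - 1) else 0) + (if i ≤ j then derivative (e i) else 0),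
    ?_, ?_⟩
  · dsimp only
    rw [if_pos (by omega), if_neg (by omega), add_zero, Nat.add_sub_cancel]
  · rw [h1, h2, h3, ← Phi_add]

lemma aeval_mul_Tpow (j : ℕ) (γ : Polynomial k) :
    ∃ e : ℕ → Polynomial k, e j = γ ∧ aeval (Dop k) γ * Tmul k ^ j = Phi k j e := by
  induction j with
  | zero =>
    refine ⟨fun _ => γ, rfl, ?_⟩
    unfold Phi
    rw [pow_zero, mul_one, Finset.sum_range_one, pow_zero, one_mul]
  | succ j ih =>
    obtain ⟨e, hej, he⟩ := ih
    obtain ⟨e', he'j, he'⟩ := Phi_mul_Tmul j e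
    exact ⟨e', by rw [he'j, hej], by rw [pow_succ, ← mul_assoc, he, he']⟩

lemma Tmul_mem : Tmul k ∈ WeylA k := Algebra.subset_adjoin (by simp)

lemma Dop_mem : Dop k ∈ WeylA k := Algebra.subset_adjoin (by simp)

lemma aeval_Dop_mem (p : Polynomial k) : aeval (Dop k) p ∈ WeylA k := by
  refine Algebra.adjoin_mono ?_ (Polynomial.aeval_mem_adjoin_singleton k (Dop k))
  simp

lemma Phi_mem (M : ℕ) (a : ℕ → Polynomial k) : Phi k M a ∈ WeylA k := by
  unfold Phi
  exact Subalgebra.sum_mem _ fun i _ =>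
    mul_mem (pow_mem Tmul_mem i) (aeval_Dop_mem (a i))

lemma exists_rep {w : Module.End k (Polynomial k)} (hw : w ∈ WeylA k) :
    ∃ M a, w = Phi k M a := by
  induction hw using Algebra.adjoin_induction with
  | mem x hx =>
    rcases hx with hx | hx
    · refine ⟨1, fun i => if i = 0 then 0 else 1, ?_⟩
      unfold Phi
      rw [Finset.sum_range_succ, Finset.sum_range_one]
      dsimp only
      rw [if_pos rfl, if_neg (by omega), map_zero, mul_zero, map_one, mul_one, pow_one, zero_add,
        hx]
    · refine ⟨0, fun _ => X, ?_⟩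
      unfold Phi
      rw [Finset.sum_range_one, pow_zero, one_mul, aeval_X]
      rw [hx]
  | algebraMap r =>
    refine ⟨0, fun _ => C r, ?_⟩
    unfold Phi
    rw [Finset.sum_range_one, pow_zero, one_mul, aeval_C]
  | add x y hx hy px py =>
    obtain ⟨M, a, rfl⟩ := px
    obtain ⟨M', a', rfl⟩ := py
    refine ⟨max M M', fun i => (if i ≤ M then a i else 0) + (if i ≤ M' then a' i else 0), ?_⟩
    rw [Phi_pad (le_max_left M M') a, Phi_pad (le_max_right M M') a', ← Phi_add]
  | mul x y hx hy px py =>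
    obtain ⟨M, a, rfl⟩ := px
    obtain ⟨M', a', rfl⟩ := py
    have claim1 : ∀ γ : Polynomial k, ∃ c, aeval (Dop k) γ * Phi k M' a' = Phi k M' c := by
      intro γ
      choose e he1 he2 using fun j => aeval_mul_Tpow (k := k) j γ
      refine ⟨fun i => ∑ j ∈ Finset.range (M' + 1),
        (if i ≤ j then e j i * a' j else 0), ?_⟩
      have step1 : aeval (Dop k) γ * Phi k M' a'
          = ∑ j ∈ Finset.range (M' + 1), (aeval (Dop k) γ * Tmul k ^ j) * aeval (Dop k) (a' j) := by
        unfold Phi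
        rw [Finset.mul_sum]
        exact Finset.sum_congr rfl fun j _ => by rw [← mul_assoc]
      rw [step1]
      rw [show (fun i => ∑ j ∈ Finset.range (M' + 1), (if i ≤ j then e j i * a' j else 0))
        = fun i => ∑ j ∈ Finset.range (M' + 1),
            (fun jj ii => if ii ≤ jj then e jj ii * a' jj else 0) j i from rfl]
      rw [Phi_fsum]
      refine Finset.sum_congr rfl fun j hj => ?_
      rw [he2 j, Phi_mul_aeval]
      exact Phi_pad (by simp at hj; omega) _
    choose c hc using fun i => claim1 (a i)
    refine ⟨M + M', fun l => ∑ i ∈ Finset.range (M + 1),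
      (fun ii ll => if ll ≤ ii + M' then (if ii ≤ ll then c ii (ll - ii) else 0) else 0) i l, ?_⟩
    have step2 : Phi k M a * Phi k M' a'
        = ∑ i ∈ Finset.range (M + 1), Tmul k ^ i * (aeval (Dop k) (a i) * Phi k M' a') := by
      unfold Phi
      rw [Finset.sum_mul]
      exact Finset.sum_congr rfl fun i _ => by rw [mul_assoc]
    rw [step2, Phi_fsum]
    refine Finset.sum_congr rfl fun i hi => ?_
    rw [hc i, Tpow_mul_Phi]
    exact Phi_pad (by simp at hi; omega) _


noncomputable def cop {k : Type} [Field k] (b : Polynomial k) : Module.End k (Polynomial k) :=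
  ∑ i ∈ Finset.range (b.natDegree + 1),
    Algebra.lmul k (Polynomial k) ((-1 : k) ^ (b.natDegree - i) • derivative^[b.natDegree - i] b)
      * Dop k ^ i

variable {k : Type} [Field k]

lemma cop_apply (b h : Polynomial k) :
    cop b h = ∑ i ∈ Finset.range (b.natDegree + 1),
      ((-1 : k) ^ (b.natDegree - i) • derivative^[b.natDegree - i] b) * derivative^[i] h := by
  unfold cop
  rw [LinearMap.sum_apply]
  refine Finset.sum_congr rfl fun i _ => ?_
  rw [Module.End.mul_apply, Dop_pow_apply]
  rfl

lemma cop_deriv (b h : Polynomial k) :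
    derivative (cop b h) = b * derivative^[b.natDegree + 1] h := by
  set N := b.natDegree with hN
  set A : ℕ → Polynomial k :=
    fun i => (-1 : k) ^ (N - i) • (derivative^[N - i + 1] b * derivative^[i] h) with hAdef
  set B : ℕ → Polynomial k :=
    fun i => (-1 : k) ^ (N - i) • (derivative^[N - i] b * derivative^[i + 1] h) with hBdef
  have hterm : ∀ i, derivative (((-1 : k) ^ (N - i) • derivative^[N - i] b) * derivative^[i] h)
      = A i + B i := by
    intro i
    rw [hAdef, hBdef]
    dsimp only
    rw [derivative_mul, derivative_smul, smul_mul_assoc, smul_mul_assoc,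
      ← Function.iterate_succ_apply' derivative, ← Function.iterate_succ_apply' derivative]
  rw [cop_apply, map_sum, Finset.sum_congr rfl fun i _ => hterm i, Finset.sum_add_distrib,
    Finset.sum_range_succ' A N, Finset.sum_range_succ B N]
  have hcancel : ∀ i ∈ Finset.range N, A (i + 1) = - B i := by
    intro i hi
    simp only [Finset.mem_range] at hi
    rw [hAdef, hBdef]
    dsimp only
    have h1 : N - (i + 1) + 1 = N - i := by omega
    have h2 : (-1 : k) ^ (N - i) = -(-1 : k) ^ (N - (i + 1)) := by
      have h3 : N - i = (N - (i + 1)) + 1 := by omega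
      rw [h3, pow_succ]
      ring
    rw [h1, h2, neg_smul, neg_neg]
  rw [Finset.sum_congr rfl hcancel]
  have hA0 : A 0 = 0 := by
    rw [hAdef]
    dsimp only
    rw [Nat.sub_zero, iterate_derivative_eq_zero (by omega : b.natDegree < N + 1), zero_mul,
      smul_zero]
  have hBN : B N = b * derivative^[N + 1] h := by
    rw [hBdef]
    dsimp only
    rw [Nat.sub_self, pow_zero, one_smul, Function.iterate_zero_apply]
  rw [hA0, hBN, add_zero, Finset.sum_neg_distrib, neg_add_cancel_left]

lemma cop_one [CharZero k] (b : Polynomial k) (hb : b ≠ 0) :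
    ∃ μ : k, μ ≠ 0 ∧ cop b 1 = C μ := by
  set N := b.natDegree with hN
  refine ⟨(-1 : k) ^ N * ((derivative^[N] b).coeff 0), ?_, ?_⟩
  · have h1 : (derivative^[N] b).coeff 0 = (N.descFactorial N : ℕ) • b.coeff N := by
      have h2 := coeff_iterate_derivative (k := N) b 0
      simpa using h2
    rw [h1, Nat.descFactorial_self]
    apply mul_ne_zero (pow_ne_zero _ (by norm_num))
    rw [nsmul_eq_mul]
    apply mul_ne_zero
    · exact Nat.cast_ne_zero.mpr (Nat.factorial_ne_zero N)
    · exact mt leadingCoeff_eq_zero.mp hb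
  · rw [cop_apply]
    rw [Finset.sum_eq_single 0]
    · have h0 : derivative^[(0:ℕ)] (1 : Polynomial k) = 1 := rfl
      rw [h0, mul_one, Nat.sub_zero]
      have hdeg : (derivative^[N] b).natDegree ≤ 0 := by
        have h3 := natDegree_iterate_derivative b N
        omega
      rw [eq_C_of_natDegree_le_zero hdeg, Polynomial.smul_C, smul_eq_mul, coeff_C_zero]
    · intro i hi hne
      have hz : derivative^[i] (1 : Polynomial k) = 0 :=
        iterate_derivative_eq_zero (by simpa using Nat.pos_of_ne_zero hne)
      rw [hz, mul_zero]
    · intro hmem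
      exact absurd (Finset.mem_range.mpr (by omega)) hmem


variable {k : Type} [Field k]

lemma aeval_Tmul_eq_lmul (p : Polynomial k) :
    aeval (Tmul k) p = Algebra.lmul k (Polynomial k) p := by
  have h := aeval_algHom_apply (Algebra.lmul k (Polynomial k)) X p
  rw [aeval_X_left_apply] at h
  unfold Tmul
  exact h

lemma lmul_mem (p : Polynomial k) : Algebra.lmul k (Polynomial k) p ∈ WeylA k := by
  rw [← aeval_Tmul_eq_lmul]
  refine Algebra.adjoin_mono ?_ (Polynomial.aeval_mem_adjoin_singleton k (Tmul k))
  simp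

lemma cop_mem (b : Polynomial k) : cop b ∈ WeylA k := by
  unfold cop
  exact Subalgebra.sum_mem _ fun i _ => mul_mem (lmul_mem _) (pow_mem Dop_mem i)

/-- key top-coefficient-tracking product lemma -/
lemma f_mul_T_aeval (m₀ : ℕ) (af : ℕ → Polynomial k) (j : ℕ) (β : Polynomial k) :
    ∃ c : ℕ → Polynomial k, c (m₀ + j) = af m₀ * β ∧
      Phi k m₀ af * (Tmul k ^ j * aeval (Dop k) β) = Phi k (m₀ + j) c := by
  choose e he1 he2 using fun i => aeval_mul_Tpow (k := k) j (af i)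
  have step1 : Phi k m₀ af * Tmul k ^ j
      = ∑ i ∈ Finset.range (m₀ + 1), Tmul k ^ i * (aeval (Dop k) (af i) * Tmul k ^ j) := by
    unfold Phi
    rw [Finset.sum_mul]
    exact Finset.sum_congr rfl fun i _ => by rw [mul_assoc]
  have step2 : Phi k m₀ af * Tmul k ^ j
      = Phi k (m₀ + j) (fun l => ∑ i ∈ Finset.range (m₀ + 1),
          (fun ii ll => if ll ≤ ii + j then (if ii ≤ ll then e ii (ll - ii) else 0) else 0) i l) := by
    rw [step1, Phi_fsum]
    refine Finset.sum_congr rfl fun i hi => ?_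
    rw [he2 i, Tpow_mul_Phi]
    exact Phi_pad (by simp at hi; omega) _
  refine ⟨fun l => (∑ i ∈ Finset.range (m₀ + 1),
      (fun ii ll => if ll ≤ ii + j then (if ii ≤ ll then e ii (ll - ii) else 0) else 0) i l) * β,
    ?_, ?_⟩
  · dsimp only
    rw [Finset.sum_eq_single m₀]
    · rw [if_pos (by omega), if_pos (by omega), Nat.add_sub_cancel_left, he1]
    · intro i hi hne
      simp only [Finset.mem_range] at hi
      rw [if_neg (by omega)]
    · intro hmem
      exact absurd (Finset.mem_range.mpr (by omega)) hmem
  · rw [← mul_assoc, step2, Phi_mul_aeval]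

lemma exists_aeval_const [CharZero k] (γ : Polynomial k) (hγ : γ ≠ 0) :
    ∃ (w : Polynomial k) (κ : k), κ ≠ 0 ∧ aeval (Dop k) γ w = C κ := by
  set s := γ.natTrailingDegree with hs
  refine ⟨X ^ s, γ.coeff s * (s.descFactorial s : k), ?_, ?_⟩
  · apply mul_ne_zero
    · rw [hs]
      exact trailingCoeff_nonzero_iff_nonzero.mpr hγ
    · rw [Nat.descFactorial_self]
      exact Nat.cast_ne_zero.mpr (Nat.factorial_ne_zero s)
  · have hrange : aeval (Dop k) γ = ∑ i ∈ Finset.range (γ.natDegree + 1),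
        γ.coeff i • Dop k ^ i := aeval_eq_sum_range (Dop k)
    rw [hrange, LinearMap.sum_apply]
    have happ : ∀ i, (γ.coeff i • Dop k ^ i) (X ^ s)
        = γ.coeff i • ((s.descFactorial i : k) • X ^ (s - i)) := by
      intro i
      rw [LinearMap.smul_apply, Dop_pow_apply, iterate_derivative_X_pow_eq_smul]
    rw [Finset.sum_congr rfl fun i _ => happ i, Finset.sum_eq_single s]
    · rw [Nat.sub_self, pow_zero, smul_smul, ← Polynomial.algebraMap_eq,
        Algebra.algebraMap_eq_smul_one]
    · intro i hi hne
      rcases lt_or_gt_of_ne hne with hlt | hgt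
      · rw [coeff_eq_zero_of_lt_natTrailingDegree (by omega), zero_smul]
      · rw [Nat.descFactorial_eq_zero_iff_lt.mpr hgt]
        norm_num
    · intro hmem
      exact absurd (Finset.mem_range.mpr
        (by have := natTrailingDegree_le_natDegree γ; omega)) hmem


variable {k : Type} [Field k]

lemma division (f : Module.End k (Polynomial k)) (m₀ : ℕ) (af : ℕ → Polynomial k)
    (hf : f = Phi k m₀ af) (hα : af m₀ ≠ 0) :
    ∀ M a, ∃ γ : Polynomial k, γ ≠ 0 ∧ ∃ q : Module.End k (Polynomial k),
      ∃ r, Phi k M a * aeval (Dop k) γ = f * q + r ∧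
        (r = 0 ∨ ∃ m' a', m' + 1 = m₀ ∧ r = Phi k m' a') := by
  intro M
  induction M using Nat.strong_induction_on with
  | _ M ih =>
    intro a
    by_cases hM : M < m₀
    · refine ⟨1, one_ne_zero, 0, Phi k M a, ?_,
        Or.inr ⟨m₀ - 1, fun i => if i ≤ M then a i else 0, by omega, Phi_pad (by omega) a⟩⟩
      rw [map_one, mul_one, mul_zero, zero_add]
    · push_neg at hM
      obtain ⟨c, hcM, hc⟩ := f_mul_T_aeval m₀ af (M - m₀) (a M)
      have hMM : m₀ + (M - m₀) = M := by omega
      rw [hMM] at hcM hc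
      have hg : Phi k M a * aeval (Dop k) (af m₀)
          - f * (Tmul k ^ (M - m₀) * aeval (Dop k) (a M))
          = Phi k M (fun i => a i * af m₀ - c i) := by
        rw [hf, hc, Phi_mul_aeval, Phi_sub]
      have htop : a M * af m₀ - c M = 0 := by rw [hcM]; ring
      cases M with
      | zero =>
        have hzero : Phi k 0 (fun i => a i * af m₀ - c i) = 0 := by
          unfold Phi
          rw [Finset.sum_range_one, pow_zero, one_mul]
          dsimp only
          rw [htop, map_zero]
        refine ⟨af m₀, hα, Tmul k ^ (0 - m₀) * aeval (Dop k) (a 0), 0, ?_, Or.inl rfl⟩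
        rw [add_zero]
        exact sub_eq_zero.mp (hg.trans hzero)
      | succ M' =>
        have hdrop : Phi k (M' + 1) (fun i => a i * af m₀ - c i)
            = Phi k M' (fun i => a i * af m₀ - c i) := by
          unfold Phi
          rw [Finset.sum_range_succ]
          dsimp only
          rw [htop, map_zero, mul_zero, add_zero]
        obtain ⟨γ', hγ', q', r', heq', hr'⟩ := ih M' (by omega) (fun i => a i * af m₀ - c i)
        refine ⟨af m₀ * γ', mul_ne_zero hα hγ',
          (Tmul k ^ (M' + 1 - m₀) * aeval (Dop k) (a (M' + 1))) * aeval (Dop k) γ' + q', r',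
          ?_, hr'⟩
        calc Phi k (M' + 1) a * aeval (Dop k) (af m₀ * γ')
            = (Phi k (M' + 1) a * aeval (Dop k) (af m₀)) * aeval (Dop k) γ' := by
              rw [map_mul, ← mul_assoc]
          _ = (f * (Tmul k ^ (M' + 1 - m₀) * aeval (Dop k) (a (M' + 1)))
              + Phi k M' (fun i => a i * af m₀ - c i)) * aeval (Dop k) γ' := by
              rw [← hdrop, ← hg, add_sub_cancel]
          _ = f * ((Tmul k ^ (M' + 1 - m₀) * aeval (Dop k) (a (M' + 1))) * aeval (Dop k) γ')
              + Phi k M' (fun i => a i * af m₀ - c i) * aeval (Dop k) γ' := by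
              rw [add_mul, mul_assoc]
          _ = f * ((Tmul k ^ (M' + 1 - m₀) * aeval (Dop k) (a (M' + 1))) * aeval (Dop k) γ')
              + (f * q' + r') := by rw [heq']
          _ = f * ((Tmul k ^ (M' + 1 - m₀) * aeval (Dop k) (a (M' + 1))) * aeval (Dop k) γ' + q')
              + r' := by rw [mul_add, add_assoc]


/-- If `V` is a p.d.i. subspace of `R = k[t]` and `f ∈ D(R,V)` is a nonzero
element of minimal `t`-degree (whenever some nonzero element of `D(R,V)` can be
written `Σ_{i ≤ m} tⁱ aᵢ(∂)`, so can `f`), then `f(R) = V`. -/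
theorem stmt14 {k : Type} [Field k] [CharZero k] (V : Submodule k (Polynomial k))
    (hV : V ≠ ⊥)
    (hpd : ∃ b : Polynomial k, b ≠ 0 ∧ ∀ a : Polynomial k,
        b ∣ derivative a → ∀ v ∈ V, a * v ∈ V)
    (hirr : ∀ J : Ideal (Polynomial k), (V : Set (Polynomial k)) ⊆ J → J = ⊤)
    (f : Module.End k (Polynomial k)) (hfW : f ∈ WeylA k) (hf0 : f ≠ 0)
    (hfV : ∀ h : Polynomial k, f h ∈ V)
    (hmin : ∀ (d : Module.End k (Polynomial k)), d ∈ WeylA k → d ≠ 0 →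
        (∀ h : Polynomial k, d h ∈ V) → ∀ m : ℕ,
        (∃ a : ℕ → Polynomial k,
            d = ∑ i ∈ Finset.range (m + 1), Tmul k ^ i * Polynomial.aeval (Dop k) (a i)) →
        ∃ a : ℕ → Polynomial k,
            f = ∑ i ∈ Finset.range (m + 1), Tmul k ^ i * Polynomial.aeval (Dop k) (a i)) :
    Set.range (fun h : Polynomial k => f h) = (V : Set (Polynomial k)) := by
  classical
  obtain ⟨b, hb0, hbV⟩ := hpd
  apply Set.eq_of_subset_of_subset
  · rintro x ⟨h, rfl⟩
    exact hfV h
  · intro v hv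
    -- normal form of f and minimal degree m₀
    have hex : ∃ m, ∃ a : ℕ → Polynomial k, f = Phi k m a := by
      obtain ⟨M, a, h⟩ := exists_rep hfW
      exact ⟨M, a, h⟩
    set m₀ := Nat.find hex with hm₀def
    obtain ⟨af, haf⟩ := Nat.find_spec hex
    rw [← hm₀def] at haf
    have hα : af m₀ ≠ 0 := by
      intro h0
      cases hm : m₀ with
      | zero =>
        apply hf0
        rw [haf]
        unfold Phi
        rw [hm] at h0 ⊢
        rw [Finset.sum_range_one, pow_zero, one_mul, h0, map_zero]
      | succ m' =>
        have hdrop : Phi k m₀ af = Phi k m' af := by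
          rw [hm]
          unfold Phi
          rw [Finset.sum_range_succ, ← hm, h0, map_zero, mul_zero, add_zero]
        exact Nat.find_min hex (by omega : m' < m₀) ⟨af, by rw [haf, hdrop]⟩
    -- the operator d_v = v · cop b
    set dv := Algebra.lmul k (Polynomial k) v * cop b with hdvdef
    have hdvW : dv ∈ WeylA k := mul_mem (lmul_mem v) (cop_mem b)
    obtain ⟨Mv, av, hrep⟩ := exists_rep hdvW
    obtain ⟨γ, hγ0, q, r, heq, hr⟩ := division f m₀ af haf hα Mv av
    rw [← hrep] at heq
    have hdvapp : ∀ w : Polynomial k, dv w = v * cop b w := by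
      intro w
      rw [hdvdef, Module.End.mul_apply]
      rfl
    have hdvV : ∀ w, dv w ∈ V := by
      intro w
      rw [hdvapp]
      have hdvd : b ∣ derivative (cop b w) := ⟨_, cop_deriv b w⟩
      have hmem := hbV _ hdvd v hv
      rwa [mul_comm] at hmem
    have hrV : ∀ w, r w ∈ V := by
      intro w
      have h1 := congrArg (fun op : Module.End k (Polynomial k) => op w) heq
      simp only [Module.End.mul_apply, LinearMap.add_apply] at h1
      have h2 : r w = dv (aeval (Dop k) γ w) - f (q w) := by
        rw [h1]
        ring
      rw [h2]
      exact Submodule.sub_mem V (hdvV _) (hfV _)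
    have hr0 : r = 0 := by
      by_contra hrz
      rcases hr with h | ⟨m', a', hm', hrphi⟩
      · exact hrz h
      have hmem : r ∈ WeylA k := by rw [hrphi]; exact Phi_mem _ _
      obtain ⟨a'', ha''⟩ := hmin r hmem hrz hrV m' ⟨a', by rw [hrphi]; rfl⟩
      exact Nat.find_min hex (by omega : m' < m₀) ⟨a'', ha''⟩
    rw [hr0, add_zero] at heq
    obtain ⟨w, κ, hκ0, hw⟩ := exists_aeval_const γ hγ0
    obtain ⟨μ, hμ0, hμ⟩ := cop_one b hb0
    have happ : dv (aeval (Dop k) γ w) = f (q w) := by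
      have h1 := congrArg (fun op : Module.End k (Polynomial k) => op w) heq
      simpa only [Module.End.mul_apply] using h1
    have hCκ : dv (C κ) = (κ * μ) • v := by
      have hsm : (C κ : Polynomial k) = κ • (1 : Polynomial k) := by
        rw [← Polynomial.algebraMap_eq, Algebra.algebraMap_eq_smul_one]
      rw [hsm, map_smul, hdvapp, hμ, mul_comm v (C μ), ← Polynomial.smul_eq_C_mul, smul_smul]
    have hfinal : f ((κ * μ)⁻¹ • q w) = v := by
      rw [map_smul, ← happ, hw, hCκ, smul_smul, inv_mul_cancel₀ (mul_ne_zero hκ0 hμ0), one_smul]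
    exact ⟨(κ * μ)⁻¹ • q w, hfinal⟩
end

section
/- Let n ≥ 2 and Uₙ = k·(1 - t^{n-1}) + tⁿk[t] ⊆ k[t]. Then the elements e*_{Uₙ} = ∂^{n-2}t^{-n}(t∂) + (-1)ⁿ(n-1)! t^{1-n} and f_{Uₙ} = (t∂-1)···(t∂-(n-1)) + (-1)ⁿ(n-1)! t^{n-1} satisfy e*_{Uₙ} · f_{Uₙ} = (∂^{n-1} + (-1)ⁿ(n-1)!)² in k[t,t⁻¹]⟨∂⟩. -/
open Polynomial

open Polynomial

section aux
variable {A : Type} [Ring A] {t tinv D : A}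

lemma wDt (h1 : D * t - t * D = 1) : D * t = t * D + 1 := by
  have := sub_eq_iff_eq_add.mp h1
  rw [this, add_comm]

lemma wDpow_t (h1 : D * t - t * D = 1) :
    ∀ m : ℕ, D ^ (m + 1) * t = t * D ^ (m + 1) + (m + 1) • D ^ m := by
  intro m
  induction m with
  | zero => simp [wDt h1]
  | succ m ih =>
      calc D ^ (m + 2) * t = D * (D ^ (m + 1) * t) := by
            rw [pow_succ', mul_assoc]
        _ = D * (t * D ^ (m + 1)) + (m + 1) • (D * D ^ m) := by
            rw [ih, mul_add, mul_smul_comm]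
        _ = (t * D + 1) * D ^ (m + 1) + (m + 1) • D ^ (m + 1) := by
            rw [← mul_assoc, wDt h1, ← pow_succ']
        _ = t * D ^ (m + 2) + (m + 2) • D ^ (m + 1) := by
            rw [add_mul, one_mul, mul_assoc, ← pow_succ', add_assoc,
              add_comm (D ^ (m + 1)), ← succ_nsmul]

lemma wD_tpow (h1 : D * t - t * D = 1) :
    ∀ m : ℕ, D * t ^ (m + 1) = t ^ (m + 1) * D + (m + 1) • t ^ m := by
  intro m
  induction m with
  | zero => simp [wDt h1]
  | succ m ih =>
      calc D * t ^ (m + 2) = (D * t ^ (m + 1)) * t := by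
            rw [mul_assoc, ← pow_succ]
        _ = t ^ (m + 1) * (D * t) + (m + 1) • (t ^ m * t) := by
            rw [ih, add_mul, smul_mul_assoc, mul_assoc]
        _ = t ^ (m + 1) * (t * D + 1) + (m + 1) • t ^ (m + 1) := by
            rw [wDt h1, ← pow_succ]
        _ = t ^ (m + 2) * D + (m + 2) • t ^ (m + 1) := by
            rw [mul_add, mul_one, ← mul_assoc, ← pow_succ, add_assoc,
              add_comm (t ^ (m + 1)), ← succ_nsmul]

lemma winv_pow (h3 : tinv * t = 1) : ∀ m : ℕ, tinv ^ m * t ^ m = 1 := by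
  intro m
  induction m with
  | zero => simp
  | succ m ih =>
      rw [pow_succ, pow_succ', mul_assoc, ← mul_assoc tinv, h3, one_mul, ih]

end aux

section aux2
variable {A : Type} [Ring A] {t tinv D : A}

lemma wtD (h1 : D * t - t * D = 1) : t * D = D * t - 1 := by
  rw [sub_eq_iff_eq_add.mp h1, add_sub_cancel_left]

lemma wtDpow (h1 : D * t - t * D = 1) (m : ℕ) :
    t * D ^ (m + 1) = D ^ (m + 1) * t - (m + 1) • D ^ m := by
  rw [wDpow_t h1 m, add_sub_cancel_right]

lemma wH (h1 : D * t - t * D = 1) (h2 : t * tinv = 1) (m : ℕ) :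
    t ^ (m + 2) * (D ^ (m + 1) * tinv)
      = t ^ (m + 1) * D ^ (m + 1) - (m + 1) • (t ^ (m + 1) * (D ^ m * tinv)) := by
  rw [pow_succ t (m + 1)]
  calc t ^ (m + 1) * t * (D ^ (m + 1) * tinv)
      = t ^ (m + 1) * ((t * D ^ (m + 1)) * tinv) := by noncomm_ring
    _ = t ^ (m + 1) * ((D ^ (m + 1) * t - (m + 1) • D ^ m) * tinv) := by rw [wtDpow h1]
    _ = t ^ (m + 1) * (D ^ (m + 1) * (t * tinv)) - (m + 1) • (t ^ (m + 1) * (D ^ m * tinv)) := by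
        noncomm_ring
    _ = t ^ (m + 1) * D ^ (m + 1) - (m + 1) • (t ^ (m + 1) * (D ^ m * tinv)) := by
        rw [h2, mul_one]

lemma wL4 (h1 : D * t - t * D = 1) (h2 : t * tinv = 1) (m : ℕ) :
    (t * D) * (t ^ (m + 2) * (D ^ (m + 1) * tinv)) = t ^ (m + 2) * D ^ (m + 2) := by
  have h6 : t ^ (m + 3) * (D ^ (m + 2) * tinv)
      = t ^ (m + 2) * D ^ (m + 2) - (m + 2) • (t ^ (m + 2) * (D ^ (m + 1) * tinv)) :=
    wH h1 h2 (m + 1)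
  calc (t * D) * (t ^ (m + 2) * (D ^ (m + 1) * tinv))
      = t * ((D * t ^ (m + 2)) * (D ^ (m + 1) * tinv)) := by noncomm_ring
    _ = t * ((t ^ (m + 2) * D + (m + 2) • t ^ (m + 1)) * (D ^ (m + 1) * tinv)) := by
        rw [wD_tpow h1 (m + 1)]
    _ = (t * t ^ (m + 2)) * ((D * D ^ (m + 1)) * tinv)
          + (m + 2) • ((t * t ^ (m + 1)) * (D ^ (m + 1) * tinv)) := by noncomm_ring
    _ = t ^ (m + 3) * (D ^ (m + 2) * tinv)
          + (m + 2) • (t ^ (m + 2) * (D ^ (m + 1) * tinv)) := by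
        rw [← pow_succ' t (m + 2), ← pow_succ' t (m + 1), ← pow_succ' D (m + 1)]
    _ = t ^ (m + 2) * D ^ (m + 2) := by rw [h6, sub_add_cancel]

end aux2

section aux3
variable {k A : Type} [Field k] [CharZero k] [Ring A] [Algebra k A] {t tinv D : A}

lemma wK (h1 : D * t - t * D = 1) (h2 : t * tinv = 1) (h3 : tinv * t = 1) :
    ∀ m : ℕ, aeval (t * D) (∏ j ∈ Finset.Icc 1 (m + 1), (X - C (j : k)))
      = t ^ (m + 2) * (D ^ (m + 1) * tinv) := by
  intro m
  induction m with
  | zero =>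
      rw [Finset.Icc_self, Finset.prod_singleton]
      rw [map_sub, aeval_X, aeval_C, Nat.cast_one, map_one]
      norm_num
      symm
      calc t ^ 2 * (D * tinv) = t * ((t * D) * tinv) := by
            rw [pow_two, mul_assoc, ← mul_assoc t D tinv]
        _ = t * ((D * t - 1) * tinv) := by rw [wtD h1]
        _ = t * D - 1 := by
            simp only [sub_mul, mul_sub, one_mul, mul_assoc, h2, mul_one]
  | succ m ih =>
      have hsplit : (∏ j ∈ Finset.Icc 1 (m + 2), (X - C ((j : ℕ) : k)))
          = (∏ j ∈ Finset.Icc 1 (m + 1), (X - C ((j : ℕ) : k)))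
              * (X - C (((m + 2 : ℕ) : k))) := Finset.prod_Icc_succ_top (by omega) _
      rw [hsplit, map_mul, ih, map_sub, aeval_X, aeval_C, map_natCast]
      have hP : (t ^ (m + 2) * (D ^ (m + 1) * tinv)) * (t * D)
          = t ^ (m + 2) * D ^ (m + 2) := by
        calc (t ^ (m + 2) * (D ^ (m + 1) * tinv)) * (t * D)
            = t ^ (m + 2) * (D ^ (m + 1) * ((tinv * t) * D)) := by noncomm_ring
          _ = t ^ (m + 2) * (D ^ (m + 1) * D) := by rw [h3, one_mul]
          _ = t ^ (m + 2) * D ^ (m + 2) := by rw [← pow_succ]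
      have h6 : t ^ (m + 3) * (D ^ (m + 2) * tinv)
          = t ^ (m + 2) * D ^ (m + 2) - (m + 2) • (t ^ (m + 2) * (D ^ (m + 1) * tinv)) :=
        wH h1 h2 (m + 1)
      calc (t ^ (m + 2) * (D ^ (m + 1) * tinv)) * (t * D - ((m + 2 : ℕ) : A))
          = (t ^ (m + 2) * (D ^ (m + 1) * tinv)) * (t * D)
              - (m + 2) • (t ^ (m + 2) * (D ^ (m + 1) * tinv)) := by
            rw [mul_sub, ← nsmul_eq_mul']
        _ = t ^ (m + 3) * (D ^ (m + 2) * tinv) := by rw [hP, h6]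
        _ = t ^ (m + 1 + 2) * (D ^ (m + 1 + 1) * tinv) := by norm_num
end aux3

/-- In the localized Weyl algebra `k[t,t⁻¹]⟨∂⟩`, for `n ≥ 2` and
`Uₙ = k(1 - t^{n-1}) + tⁿk[t]`, the characteristic elements
`e*_{Uₙ} = ∂^{n-2}t^{-n}(t∂) + (-1)ⁿ(n-1)!·t^{1-n}` and
`f_{Uₙ} = (t∂-1)⋯(t∂-(n-1)) + (-1)ⁿ(n-1)!·t^{n-1}` satisfy
`e*_{Uₙ}·f_{Uₙ} = (∂^{n-1} + (-1)ⁿ(n-1)!)²`. -/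
theorem stmt15 {k A : Type} [Field k] [CharZero k] [Ring A] [Algebra k A]
    (t tinv D : A) (h1 : D * t - t * D = 1) (h2 : t * tinv = 1) (h3 : tinv * t = 1)
    (n : ℕ) (hn : 2 ≤ n) :
    (D ^ (n - 2) * (tinv ^ n * (t * D))
          + ((-1 : k) ^ n * (n - 1).factorial) • tinv ^ (n - 1)) *
        (aeval (t * D) (∏ j ∈ Finset.Icc 1 (n - 1), (X - C (j : k)))
          + ((-1 : k) ^ n * (n - 1).factorial) • t ^ (n - 1))
      = (D ^ (n - 1) + algebraMap k A ((-1) ^ n * (n - 1).factorial)) ^ 2 := by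
  obtain ⟨m, rfl⟩ : ∃ m, n = m + 2 := ⟨n - 2, by omega⟩
  simp only [show m + 2 - 1 = m + 1 from rfl, show m + 2 - 2 = m from rfl]
  rw [wK h1 h2 h3 m]
  set c : k := (-1 : k) ^ (m + 2) * ((m + 1).factorial : k) with hc
  have hE1 : tinv ^ (m + 2) * (t * D) = tinv ^ (m + 1) * D := by
    rw [pow_succ, mul_assoc, ← mul_assoc tinv t D, h3, one_mul]
  have hxt : tinv ^ (m + 1) * t ^ m = tinv := by
    rw [pow_succ' tinv m, mul_assoc, winv_pow h3, mul_one]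
  have hA : (D ^ m * (tinv ^ (m + 2) * (t * D))) * (t ^ (m + 2) * (D ^ (m + 1) * tinv))
      = D ^ (m + 1) * D ^ (m + 1) := by
    calc (D ^ m * (tinv ^ (m + 2) * (t * D))) * (t ^ (m + 2) * (D ^ (m + 1) * tinv))
        = D ^ m * (tinv ^ (m + 2) * ((t * D) * (t ^ (m + 2) * (D ^ (m + 1) * tinv)))) := by
          simp only [mul_assoc]
      _ = D ^ m * (tinv ^ (m + 2) * (t ^ (m + 2) * D ^ (m + 2))) := by rw [wL4 h1 h2 m]
      _ = D ^ m * ((tinv ^ (m + 2) * t ^ (m + 2)) * D ^ (m + 2)) := by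
          rw [← mul_assoc (tinv ^ (m + 2)) (t ^ (m + 2)) (D ^ (m + 2))]
      _ = D ^ m * D ^ (m + 2) := by rw [winv_pow h3, one_mul]
      _ = D ^ (m + 1) * D ^ (m + 1) := by rw [← pow_add, ← pow_add]; congr 1; omega
  have hB : (D ^ m * (tinv ^ (m + 2) * (t * D))) * (c • t ^ (m + 1))
      = c • D ^ (m + 1) + c • ((m + 1) • (D ^ m * tinv)) := by
    rw [hE1, mul_smul_comm]
    have hin : (D ^ m * (tinv ^ (m + 1) * D)) * t ^ (m + 1)
        = D ^ (m + 1) + (m + 1) • (D ^ m * tinv) := by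
      calc (D ^ m * (tinv ^ (m + 1) * D)) * t ^ (m + 1)
          = D ^ m * (tinv ^ (m + 1) * (D * t ^ (m + 1))) := by simp only [mul_assoc]
        _ = D ^ m * (tinv ^ (m + 1) * (t ^ (m + 1) * D + (m + 1) • t ^ m)) := by
            rw [wD_tpow h1 m]
        _ = D ^ m * ((tinv ^ (m + 1) * t ^ (m + 1)) * D)
              + (m + 1) • (D ^ m * (tinv ^ (m + 1) * t ^ m)) := by noncomm_ring
        _ = D ^ (m + 1) + (m + 1) • (D ^ m * tinv) := by
            rw [winv_pow h3, one_mul, hxt, ← pow_succ]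
    rw [hin, smul_add]
  have hC : (c • tinv ^ (m + 1)) * (t ^ (m + 2) * (D ^ (m + 1) * tinv))
      = c • D ^ (m + 1) - c • ((m + 1) • (D ^ m * tinv)) := by
    rw [smul_mul_assoc]
    have h5 : tinv ^ (m + 1) * (t ^ (m + 2) * (D ^ (m + 1) * tinv))
        = D ^ (m + 1) - (m + 1) • (D ^ m * tinv) := by
      calc tinv ^ (m + 1) * (t ^ (m + 2) * (D ^ (m + 1) * tinv))
          = (tinv ^ (m + 1) * t ^ (m + 1)) * ((t * D ^ (m + 1)) * tinv) := by
            rw [pow_succ t (m + 1)]; noncomm_ring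
        _ = (t * D ^ (m + 1)) * tinv := by rw [winv_pow h3, one_mul]
        _ = (D ^ (m + 1) * t - (m + 1) • D ^ m) * tinv := by rw [wtDpow h1 m]
        _ = D ^ (m + 1) * (t * tinv) - (m + 1) • (D ^ m * tinv) := by noncomm_ring
        _ = D ^ (m + 1) - (m + 1) • (D ^ m * tinv) := by rw [h2, mul_one]
    rw [h5, smul_sub]
  have hD : (c • tinv ^ (m + 1)) * (c • t ^ (m + 1)) = (c * c) • (1 : A) := by
    rw [smul_mul_assoc, mul_smul_comm, winv_pow h3, smul_smul]
  have hr1 : algebraMap k A c * D ^ (m + 1) = c • D ^ (m + 1) := (Algebra.smul_def c _).symm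
  have hr2 : D ^ (m + 1) * algebraMap k A c = c • D ^ (m + 1) := by
    rw [← Algebra.commutes c (D ^ (m + 1))]; exact (Algebra.smul_def c _).symm
  have hr3 : algebraMap k A c * algebraMap k A c = (c * c) • (1 : A) := by
    rw [← map_mul, Algebra.algebraMap_eq_smul_one]
  rw [add_mul, mul_add, mul_add, hA, hB, hC, hD, pow_two, add_mul, mul_add, mul_add,
    hr1, hr2, hr3]
  abel
end
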